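/- arXiv:2401.16358 — 4 statements merged into one kernel-verified Lean document; each statement's English description precedes it below -/
import Mathlib

section
/- Let p be a prime ideal of R such that p ∈ Ass_R(I^n M / I^n N) for all sufficiently large n. Then p ∈ Ass_R(M / I^n N) for all sufficiently large n, and there exist a ∈ {d_1, …, d_c} and b ∈ ℤ such that v_p(M / I^n N) ≤ a·n + b for all sufficiently large n. -/
open DirectSum Polynomial PolynomialModule
open scoped Classical

set_option linter.unusedSectionVars false
set_option maxHeartbeats 1600000
set_option synthInstance.maxHeartbeats 400000

section GradedHelpers

variable {R M : Type*} [CommRing R] [AddCommGroup M] [Module R M]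
variable (𝒜 : ℤ → AddSubgroup R) (ℳ : ℤ → AddSubgroup M)
variable [GradedRing 𝒜] [DirectSum.Decomposition ℳ]

theorem hdec_lemma (hsmul : ∀ (i j : ℤ), ∀ r ∈ 𝒜 i, ∀ x ∈ ℳ j, r • x ∈ ℳ (i + j))
    {k : ℤ} {r : R} (hr : r ∈ 𝒜 k) (x : M) (v : ℤ) :
    (DirectSum.decompose ℳ (r • x) v : M) = r • (DirectSum.decompose ℳ x (v - k) : M) := by
  induction x using DirectSum.Decomposition.inductionOn ℳ with
  | zero => simp
  | @homogeneous j m =>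
    by_cases h : v = k + j
    · subst h
      rw [DirectSum.decompose_of_mem_same ℳ (hsmul k j r hr m m.2)]
      have : k + j - k = j := by ring
      rw [this, DirectSum.decompose_of_mem_same ℳ m.2]
    · rw [DirectSum.decompose_of_mem_ne ℳ (hsmul k j r hr m m.2) (fun hh => h hh.symm)]
      have : v - k ≠ j := fun hh => h (by omega)
      rw [DirectSum.decompose_of_mem_ne ℳ m.2 (fun hh => this hh.symm), smul_zero]
  | add a b ha hb => rw [smul_add, DirectSum.decompose_add, DirectSum.add_apply,
      AddSubgroup.coe_add, ha, hb, DirectSum.decompose_add, DirectSum.add_apply,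
      AddSubgroup.coe_add, smul_add]

theorem decompose_coe_sum {ι : Type*} (s : Finset ι) (f : ι → M) (i : ℤ) :
    (DirectSum.decompose ℳ (∑ k ∈ s, f k) i : M) = ∑ k ∈ s, (DirectSum.decompose ℳ (f k) i : M) := by
  classical
  induction s using Finset.induction with
  | empty => simp
  | insert a s h ih =>
    rw [Finset.sum_insert h, DirectSum.decompose_add, DirectSum.add_apply, AddSubgroup.coe_add,
      ih, Finset.sum_insert h]

/-- K • N is a graded submodule when K homogeneous ideal, N graded. -/
theorem graded_smul_mem (hsmul : ∀ (i j : ℤ), ∀ r ∈ 𝒜 i, ∀ x ∈ ℳ j, r • x ∈ ℳ (i + j))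
    {K : Ideal R} (hK : K.IsHomogeneous 𝒜)
    {N : Submodule R M} (hN : ∀ x ∈ N, ∀ i : ℤ, (DirectSum.decompose ℳ x i : M) ∈ N) :
    ∀ x ∈ K • N, ∀ i : ℤ, (DirectSum.decompose ℳ x i : M) ∈ K • N := by
  classical
  intro x hx
  refine Submodule.smul_induction_on hx ?_ ?_
  · intro a ha n hn i
    have hrw : a • n = ∑ k ∈ (DirectSum.decompose 𝒜 a).support, ((DirectSum.decompose 𝒜 a k : R)) • n := by
      rw [← Finset.sum_smul]
      congr 1
      exact (DirectSum.sum_support_decompose 𝒜 a).symm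
    rw [hrw, decompose_coe_sum]
    refine Submodule.sum_mem _ (fun k _ => ?_)
    rw [hdec_lemma 𝒜 ℳ hsmul (SetLike.coe_mem _) n i]
    exact Submodule.smul_mem_smul (hK k ha) (hN n hn _)
  · intro f g hf hg i
    rw [DirectSum.decompose_add, DirectSum.add_apply, AddSubgroup.coe_add]
    exact Submodule.add_mem _ (hf i) (hg i)

/-- powers of homogeneous ideals are homogeneous -/
theorem homog_pow {K : Ideal R} (hK : K.IsHomogeneous 𝒜) (n : ℕ) : (K ^ n).IsHomogeneous 𝒜 := by
  induction n with
  | zero => rw [pow_zero, Ideal.one_eq_top]; intro i r _; exact Submodule.mem_top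
  | succ n ih => rw [pow_succ]; exact Ideal.IsHomogeneous.mul ih hK

/-- sub-lemma A : power of top component of a multiplies x into L -/
theorem top_pow_smul_mem
    (hsmul : ∀ (i j : ℤ), ∀ r ∈ 𝒜 i, ∀ x ∈ ℳ j, r • x ∈ ℳ (i + j))
    {L : Submodule R M} (hL : ∀ x ∈ L, ∀ i : ℤ, (DirectSum.decompose ℳ x i : M) ∈ L) :
    ∀ (s : ℕ) (x : M), ((DirectSum.decompose ℳ x).support).card ≤ s →
      ∀ (a : R) (k : ℤ), a • x ∈ L → (∀ k' > k, (DirectSum.decompose 𝒜 a k' : R) = 0) →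
      (DirectSum.decompose 𝒜 a k : R) ^ s • x ∈ L := by
  classical
  intro s
  induction s with
  | zero =>
    intro x hx a k hax _
    have hsupp : (DirectSum.decompose ℳ x).support = ∅ := Finset.card_eq_zero.mp (Nat.le_zero.mp hx)
    have hx0 : x = 0 := by
      conv_lhs => rw [← DirectSum.sum_support_decompose ℳ x]
      rw [hsupp, Finset.sum_empty]
    rw [hx0, smul_zero]; exact L.zero_mem
  | succ s ih =>
    intro x hx a k hax htop
    by_cases hne : (DirectSum.decompose ℳ x).support.Nonempty
    · set im := (DirectSum.decompose ℳ x).support.max' hne with him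
      set xm : M := (DirectSum.decompose ℳ x im : M) with hxm
      set ak : R := (DirectSum.decompose 𝒜 a k : R) with hak
      -- step 1 : ak • xm ∈ L
      have hdecax : (DirectSum.decompose ℳ (a • x) (k + im) : M) = ak • xm := by
        have hrw : a • x = ∑ k' ∈ (DirectSum.decompose 𝒜 a).support,
            ((DirectSum.decompose 𝒜 a k' : R)) • x := by
          rw [← Finset.sum_smul]; congr 1; exact (DirectSum.sum_support_decompose 𝒜 a).symm
        rw [hrw, decompose_coe_sum]
        have hterm : ∀ k' ∈ (DirectSum.decompose 𝒜 a).support, k' ≠ k →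
            (DirectSum.decompose ℳ ((DirectSum.decompose 𝒜 a k' : R) • x) (k + im) : M) = 0 := by
          intro k' _ hkk
          rw [hdec_lemma 𝒜 ℳ hsmul (SetLike.coe_mem _) x (k + im)]
          rcases lt_or_gt_of_ne hkk with h | h
          · -- k' < k : index k + im - k' > im : beyond max
            have : k + im - k' ∉ (DirectSum.decompose ℳ x).support := by
              intro hmem
              have := Finset.le_max' _ _ hmem
              omega
            rw [DFinsupp.notMem_support_iff.mp this]
            simp
          · rw [htop k' h, zero_smul]
        rw [Finset.sum_eq_single k hterm]
        · rw [hdec_lemma 𝒜 ℳ hsmul (SetLike.coe_mem _) x (k + im)]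
          have : k + im - k = im := by ring
          rw [this]
        · intro hk
          have h0 : (DirectSum.decompose 𝒜 a k : R) = 0 := by
            rw [DFinsupp.notMem_support_iff.mp hk]; rfl
          rw [h0, zero_smul]
          simp [hak, h0]
      have h1 : ak • xm ∈ L := hdecax ▸ hL _ hax (k + im)
      -- step 2 : induction
      set x' : M := ak • (x - xm) with hx'
      have hax' : a • x' ∈ L := by
        have : a • x' = ak • (a • x) - a • (ak • xm) := by
          rw [hx', smul_sub]
          rw [smul_sub, smul_comm a ak x, smul_comm a ak xm]
        rw [this]
        exact L.sub_mem (L.smul_mem _ hax) (L.smul_mem _ h1)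
      have hsupp' : ((DirectSum.decompose ℳ x').support).card ≤ s := by
        -- support of x' maps into support x \ {im} via (· - k)
        have hmap : ∀ v ∈ (DirectSum.decompose ℳ x').support,
            v - k ∈ (DirectSum.decompose ℳ x).support.erase im := by
          intro v hv
          rw [DFinsupp.mem_support_iff] at hv
          have hcoe : (DirectSum.decompose ℳ x' v : M) ≠ 0 := by
            intro h0
            apply hv
            exact Subtype.ext h0
          rw [hx', hdec_lemma 𝒜 ℳ hsmul (SetLike.coe_mem _) (x - xm) v] at hcoe
          have hsub : (DirectSum.decompose ℳ (x - xm) (v - k) : M) =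
              (DirectSum.decompose ℳ x (v - k) : M) - (DirectSum.decompose ℳ xm (v - k) : M) := by
            rw [DirectSum.decompose_sub, DirectSum.sub_apply, AddSubgroup.coe_sub]
          by_cases hvim : v - k = im
          · exfalso
            apply hcoe
            rw [hsub, hvim, hxm, DirectSum.decompose_of_mem_same ℳ (SetLike.coe_mem _), sub_self,
              smul_zero]
          · refine Finset.mem_erase.mpr ⟨hvim, ?_⟩
            rw [DFinsupp.mem_support_iff]
            intro h0
            apply hcoe
            rw [hsub, h0]
            have : (DirectSum.decompose ℳ xm (v - k) : M) = 0 := by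
              rw [hxm, DirectSum.decompose_of_mem_ne ℳ (SetLike.coe_mem
                (DirectSum.decompose ℳ x im)) (fun hh => hvim hh.symm)]
            rw [this]
            simp
        have hinj : Set.InjOn (· - k) ((DirectSum.decompose ℳ x').support : Set ℤ) := by
          intro u _ v _ h
          simpa using h
        have := Finset.card_le_card_of_injOn (· - k) hmap hinj
        have hcard : ((DirectSum.decompose ℳ x).support.erase im).card =
            (DirectSum.decompose ℳ x).support.card - 1 :=
          Finset.card_erase_of_mem (Finset.max'_mem _ hne)
        omega
      have := ih x' hsupp' a k hax' htop
      -- ak^s • x' = ak^{s+1} • x - ak^s • (ak • xm)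
      have hfin : ak ^ (s+1) • x = ak ^ s • x' + ak ^ s • (ak • xm) := by
        rw [hx', smul_sub, smul_sub, sub_add_cancel, smul_smul, ← pow_succ]
      rw [hfin]
      exact L.add_mem this (L.smul_mem _ h1)
    · have hx0 : x = 0 := by
        conv_lhs => rw [← DirectSum.sum_support_decompose ℳ x]
        rw [Finset.not_nonempty_iff_eq_empty.mp hne, Finset.sum_empty]
      rw [hx0, smul_zero]; exact L.zero_mem


/-- colon primes of graded submodules are homogeneous -/
theorem colon_homogeneous
    (hsmul : ∀ (i j : ℤ), ∀ r ∈ 𝒜 i, ∀ x ∈ ℳ j, r • x ∈ ℳ (i + j))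
    {L : Submodule R M} (hL : ∀ x ∈ L, ∀ i : ℤ, (DirectSum.decompose ℳ x i : M) ∈ L)
    {p : Ideal R} (hp : p.IsPrime) (x₀ : M) (hc : ∀ r : R, r ∈ p ↔ r • x₀ ∈ L) :
    ∀ a ∈ p, ∀ k : ℤ, (DirectSum.decompose 𝒜 a k : R) ∈ p := by
  classical
  suffices key : ∀ (t : ℕ) (a : R), (DirectSum.decompose 𝒜 a).support.card ≤ t → a ∈ p →
      ∀ k : ℤ, (DirectSum.decompose 𝒜 a k : R) ∈ p by
    intro a ha k
    exact key _ a le_rfl ha k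
  intro t
  induction t with
  | zero =>
    intro a ha _ k
    have ha0 : a = 0 := by
      conv_lhs => rw [← DirectSum.sum_support_decompose 𝒜 a]
      rw [Finset.card_eq_zero.mp (Nat.le_zero.mp ha), Finset.sum_empty]
    rw [ha0, DirectSum.decompose_zero]
    simpa using p.zero_mem
  | succ t ih =>
    intro a ha hap k
    by_cases hne : (DirectSum.decompose 𝒜 a).support.Nonempty
    · set km := (DirectSum.decompose 𝒜 a).support.max' hne with hkm
      set akm : R := (DirectSum.decompose 𝒜 a km : R) with hakm
      have htop : ∀ k' > km, (DirectSum.decompose 𝒜 a k' : R) = 0 := by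
        intro k' hk'
        have : k' ∉ (DirectSum.decompose 𝒜 a).support := by
          intro hmem
          have := Finset.le_max' _ _ hmem
          omega
        rw [DFinsupp.notMem_support_iff.mp this]; rfl
      have hpow : akm ^ ((DirectSum.decompose ℳ x₀).support.card) • x₀ ∈ L :=
        top_pow_smul_mem 𝒜 ℳ hsmul hL _ x₀ le_rfl a km ((hc a).mp hap) htop
      have hkmp : akm ∈ p := hp.mem_of_pow_mem _ ((hc _).mpr hpow)
      -- a - akm has smaller support
      have hsub : ∀ k', (DirectSum.decompose 𝒜 (a - akm) k' : R) =
          if k' = km then 0 else (DirectSum.decompose 𝒜 a k' : R) := by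
        intro k'
        rw [DirectSum.decompose_sub, DirectSum.sub_apply, AddSubgroup.coe_sub]
        by_cases h : k' = km
        · subst h
          rw [if_pos rfl, hakm, DirectSum.decompose_of_mem_same 𝒜
            (SetLike.coe_mem (DirectSum.decompose 𝒜 a km)), sub_self]
        · rw [if_neg h, hakm, DirectSum.decompose_of_mem_ne 𝒜
            (SetLike.coe_mem (DirectSum.decompose 𝒜 a km)) (fun hh => h hh.symm), sub_zero]
      have hsupp : (DirectSum.decompose 𝒜 (a - akm)).support ⊆
          (DirectSum.decompose 𝒜 a).support.erase km := by
        intro k' hk'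
        rw [DFinsupp.mem_support_iff] at hk'
        have hcoe : (DirectSum.decompose 𝒜 (a - akm) k' : R) ≠ 0 :=
          fun h0 => hk' (Subtype.ext h0)
        rw [hsub k'] at hcoe
        by_cases h : k' = km
        · rw [if_pos h] at hcoe; exact absurd rfl hcoe
        · rw [if_neg h] at hcoe
          exact Finset.mem_erase.mpr ⟨h, DFinsupp.mem_support_iff.mpr (fun h0 => hcoe (by rw [h0]; rfl))⟩
      have hcard : (DirectSum.decompose 𝒜 (a - akm)).support.card ≤ t := by
        have h1 := Finset.card_le_card hsupp
        have h2 : ((DirectSum.decompose 𝒜 a).support.erase km).card =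
            (DirectSum.decompose 𝒜 a).support.card - 1 :=
          Finset.card_erase_of_mem (Finset.max'_mem _ hne)
        omega
      have hsubp : a - akm ∈ p := p.sub_mem hap hkmp
      have := ih (a - akm) hcard hsubp
      by_cases h : k = km
      · rw [h, ← hakm]; exact hkmp
      · have := this k
        rw [hsub k, if_neg h] at this
        exact this
    · have ha0 : a = 0 := by
        conv_lhs => rw [← DirectSum.sum_support_decompose 𝒜 a]
        rw [Finset.not_nonempty_iff_eq_empty.mp hne, Finset.sum_empty]
      rw [ha0, DirectSum.decompose_zero]
      simpa using p.zero_mem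

/-- some homogeneous component of a colon-witness is a colon-witness -/
theorem component_colon_witness
    (hsmul : ∀ (i j : ℤ), ∀ r ∈ 𝒜 i, ∀ x ∈ ℳ j, r • x ∈ ℳ (i + j))
    {L : Submodule R M} (hL : ∀ x ∈ L, ∀ i : ℤ, (DirectSum.decompose ℳ x i : M) ∈ L)
    {p : Ideal R} (hp : p.IsPrime) (x₀ : M) (hc : ∀ r : R, r ∈ p ↔ r • x₀ ∈ L) :
    ∃ i : ℤ, ∀ r : R, r ∈ p ↔ r • (DirectSum.decompose ℳ x₀ i : M) ∈ L := by
  classical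
  have hphom := colon_homogeneous 𝒜 ℳ hsmul hL hp x₀ hc
  -- (a) : p ⊆ colon of each component
  have hup : ∀ (i : ℤ) (r : R), r ∈ p → r • (DirectSum.decompose ℳ x₀ i : M) ∈ L := by
    intro i r hr
    have hrw : r • (DirectSum.decompose ℳ x₀ i : M) =
        ∑ k ∈ (DirectSum.decompose 𝒜 r).support,
          (DirectSum.decompose 𝒜 r k : R) • (DirectSum.decompose ℳ x₀ i : M) := by
      rw [← Finset.sum_smul]
      congr 1
      exact (DirectSum.sum_support_decompose 𝒜 r).symm
    rw [hrw]
    refine Submodule.sum_mem _ (fun k _ => ?_)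
    have h1 : (DirectSum.decompose 𝒜 r k : R) • x₀ ∈ L := (hc _).mp (hphom r hr k)
    have h2 := hL _ h1 (k + i)
    rw [hdec_lemma 𝒜 ℳ hsmul (SetLike.coe_mem _) x₀ (k + i)] at h2
    have : k + i - k = i := by ring
    rwa [this] at h2
  -- supp x₀ nonempty
  have hne : (DirectSum.decompose ℳ x₀).support.Nonempty := by
    by_contra h
    have hx0 : x₀ = 0 := by
      conv_lhs => rw [← DirectSum.sum_support_decompose ℳ x₀]
      rw [Finset.not_nonempty_iff_eq_empty.mp h, Finset.sum_empty]
    have : (1 : R) ∈ p := (hc 1).mpr (by rw [hx0, smul_zero]; exact L.zero_mem)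
    exact hp.ne_top ((Ideal.eq_top_iff_one p).mpr this)
  -- (b) : some component has colon ≤ p
  by_contra hcon
  push_neg at hcon
  have hex : ∀ i : ℤ,
      ∃ r : R, r • (DirectSum.decompose ℳ x₀ i : M) ∈ L ∧ r ∉ p := by
    intro i
    obtain ⟨r, hr⟩ := hcon i
    rcases hr with ⟨ha, hb⟩ | ⟨ha, hb⟩
    · exact (hb (hup i r ha)).elim
    · exact ⟨r, hb, ha⟩
  choose rj hj1 hj2 using hex
  set S := (DirectSum.decompose ℳ x₀).support with hS
  set r : R := ∏ i ∈ S, rj i with hr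
  have hrnotp : r ∉ p := by
    intro hmem
    obtain ⟨i, _, hip⟩ := (Ideal.IsPrime.prod_mem_iff).mp hmem
    exact hj2 i hip
  have hrx : r • x₀ ∈ L := by
    rw [show x₀ = ∑ i ∈ S, (DirectSum.decompose ℳ x₀ i : M) from
      (DirectSum.sum_support_decompose ℳ x₀).symm]
    rw [Finset.smul_sum]
    refine Submodule.sum_mem _ (fun i hi => ?_)
    have hsplit : r = rj i * ∏ j ∈ S.erase i, rj j := by
      rw [hr, ← Finset.mul_prod_erase S _ hi]
    rw [hsplit, mul_comm, mul_smul]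
    exact L.smul_mem _ (hj1 i)
  exact hrnotp ((hc r).mpr hrx)
end GradedHelpers

section PMCompat

variable {R M : Type*} [CommRing R] [AddCommGroup M] [Module R M]

instance pmCoeFun : CoeFun (PolynomialModule R M) (fun _ => ℕ → M) := ⟨fun f => f.coeff⟩

theorem PolynomialModule.add_apply (f g : PolynomialModule R M) (i : ℕ) :
    (f + g).coeff i = f.coeff i + g.coeff i := rfl

theorem PolynomialModule.zero_apply (i : ℕ) : (0 : PolynomialModule R M).coeff i = 0 := rfl

theorem pm_single_apply (m : ℕ) (x : M) (i : ℕ) :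
    (PolynomialModule.single R m x).coeff i = if m = i then x else 0 := Finsupp.single_apply

theorem pm_single_sum {ι : Type*} (n : ℕ) (s : Finset ι) (g : ι → M) :
    PolynomialModule.single R n (∑ k ∈ s, g k) = ∑ k ∈ s, PolynomialModule.single R n (g k) := by
  induction s using Finset.cons_induction with
  | empty => simp
  | cons a s h ih => rw [Finset.sum_cons, Finset.sum_cons, PolynomialModule.single_add, ih]

theorem pm_sum_single (f : PolynomialModule R M) :
    (f.coeff.sum fun i m => PolynomialModule.single R i m) = f := by
  ext1
  rw [Finsupp.sum, PolynomialModule.coeff_sum]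
  simp only [PolynomialModule.coeff_single]
  exact Finsupp.sum_single f.coeff

end PMCompat
section ReesPart

open Polynomial PolynomialModule

variable {R M : Type*} [CommRing R] [AddCommGroup M] [Module R M]
variable (I J : Ideal R) (N : Submodule R M)

theorem pow_smul_mem_helper (t q : ℕ) {a : R} (ha : a ∈ I ^ t) {m : M} {N : Submodule R M}
    (hm : m ∈ (I ^ q • N : Submodule R M)) : a • m ∈ (I ^ (t + q) • N : Submodule R M) := by
  have h : (I ^ (t + q) • N : Submodule R M) = I ^ t • (I ^ q • N) := by
    rw [pow_add]
    exact Submodule.smul_assoc _ _ _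
  rw [h]
  exact Submodule.smul_mem_smul ha hm

theorem pow_le_pow_JI (hJI : J ≤ I) : ∀ t : ℕ, J ^ t ≤ I ^ t := fun t => by
  induction t with
  | zero => simp
  | succ t ih => rw [pow_succ, pow_succ]; exact Ideal.mul_mono ih hJI

theorem reescoeff_mem (hJI : J ≤ I) (s : reesAlgebra J) (t : ℕ) :
    (s : R[X]).coeff t ∈ I ^ t :=
  pow_le_pow_JI I J hJI t ((mem_reesAlgebra_iff J (s : R[X])).mp s.2 t)

/-- the Rees module of the filtration Iⁿ•⊤, as a submodule over the Rees algebra of J -/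
noncomputable def Fsub (hJI : J ≤ I) : Submodule (reesAlgebra J) (PolynomialModule R M) where
  carrier := {f | ∀ i : ℕ, f i ∈ (I ^ i • (⊤ : Submodule R M) : Submodule R M)}
  add_mem' := by
    intro f g hf hg i
    rw [PolynomialModule.add_apply]
    exact Submodule.add_mem _ (hf i) (hg i)
  zero_mem' := by
    intro i
    rw [PolynomialModule.zero_apply]
    exact Submodule.zero_mem _
  smul_mem' := by
    intro s f hf i
    rw [Subalgebra.smul_def, PolynomialModule.smul_apply]
    refine Submodule.sum_mem _ ?_
    rintro ⟨t, q⟩ ht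
    rw [Finset.HasAntidiagonal.mem_antidiagonal] at ht
    subst ht
    exact pow_smul_mem_helper I _ _ (reescoeff_mem I J hJI s t) (hf q)

theorem mem_Fsub (hJI : J ≤ I) (f : PolynomialModule R M) :
    f ∈ Fsub I J hJI ↔ ∀ i : ℕ, f i ∈ (I ^ i • (⊤ : Submodule R M) : Submodule R M) := Iff.rfl

variable (p : Ideal R)

/-- the submodule E of the Rees module : coefficientwise in Iⁿ•⊤ and p • f ⊆ Iⁿ•N -/
noncomputable def Esub (hJI : J ≤ I) : Submodule (reesAlgebra J) (PolynomialModule R M) where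
  carrier := {f | ∀ i : ℕ, f i ∈ (I ^ i • (⊤ : Submodule R M) : Submodule R M) ∧
      ∀ r ∈ p, r • (f i) ∈ (I ^ i • N : Submodule R M)}
  add_mem' := by
    intro f g hf hg i
    rw [PolynomialModule.add_apply]
    exact ⟨Submodule.add_mem _ (hf i).1 (hg i).1,
      fun r hr => by rw [smul_add]; exact Submodule.add_mem _ ((hf i).2 r hr) ((hg i).2 r hr)⟩
  zero_mem' := by
    intro i
    rw [PolynomialModule.zero_apply]
    exact ⟨Submodule.zero_mem _, fun r hr => by rw [smul_zero]; exact Submodule.zero_mem _⟩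
  smul_mem' := by
    intro s f hf i
    rw [Subalgebra.smul_def, PolynomialModule.smul_apply]
    constructor
    · refine Submodule.sum_mem _ ?_
      rintro ⟨t, q⟩ ht
      rw [Finset.HasAntidiagonal.mem_antidiagonal] at ht
      subst ht
      exact pow_smul_mem_helper I _ _ (reescoeff_mem I J hJI s t) (hf q).1
    · intro r hr
      rw [Finset.smul_sum]
      refine Submodule.sum_mem _ ?_
      rintro ⟨t, q⟩ ht
      rw [Finset.HasAntidiagonal.mem_antidiagonal] at ht
      subst ht
      rw [smul_comm]
      exact pow_smul_mem_helper I _ _ (reescoeff_mem I J hJI s t) ((hf q).2 r hr)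

theorem mem_Esub (hJI : J ≤ I) (f : PolynomialModule R M) :
    f ∈ Esub I J N p hJI ↔ ∀ i : ℕ, f i ∈ (I ^ i • (⊤ : Submodule R M) : Submodule R M) ∧
      ∀ r ∈ p, r • (f i) ∈ (I ^ i • N : Submodule R M) := Iff.rfl

/-- the p-saturation-trivial part L' -/
noncomputable def Lsub (hp : p.IsPrime) (hJI : J ≤ I) :
    Submodule (reesAlgebra J) (PolynomialModule R M) where
  carrier := {f | ∃ r : R, r ∉ p ∧ ∀ i : ℕ, r • (f i) ∈ (I ^ i • N : Submodule R M)}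
  add_mem' := by
    rintro f g ⟨r, hr, hrf⟩ ⟨r', hr', hrg⟩
    refine ⟨r * r', fun h => ((hp.mem_or_mem h).elim hr hr'), fun i => ?_⟩
    rw [PolynomialModule.add_apply, smul_add]
    refine Submodule.add_mem _ ?_ ?_
    · rw [mul_comm, mul_smul]
      exact Submodule.smul_mem _ _ (hrf i)
    · rw [mul_smul]
      exact Submodule.smul_mem _ _ (hrg i)
  zero_mem' := by
    refine ⟨1, fun h => hp.ne_top ((Ideal.eq_top_iff_one p).mpr h), fun i => ?_⟩
    rw [PolynomialModule.zero_apply, smul_zero]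
    exact Submodule.zero_mem _
  smul_mem' := by
    rintro s f ⟨r, hr, hrf⟩
    refine ⟨r, hr, fun i => ?_⟩
    rw [Subalgebra.smul_def, PolynomialModule.smul_apply, Finset.smul_sum]
    refine Submodule.sum_mem _ ?_
    rintro ⟨t, q⟩ ht
    rw [Finset.HasAntidiagonal.mem_antidiagonal] at ht
    subst ht
    rw [smul_comm]
    exact pow_smul_mem_helper I _ _ (reescoeff_mem I J hJI s t) (hrf q)

theorem mem_Lsub (hp : p.IsPrime) (hJI : J ≤ I) (f : PolynomialModule R M) :
    f ∈ Lsub I J N p hp hJI ↔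
      ∃ r : R, r ∉ p ∧ ∀ i : ℕ, r • (f i) ∈ (I ^ i • N : Submodule R M) := Iff.rfl

variable {c : ℕ} (y : Fin c → R)

/-- product of monomials (y j)·X over a list -/
noncomputable def Yprod (w : List (Fin c)) : R[X] :=
  (w.map fun j => (monomial 1 (y j) : R[X])).prod

theorem Yprod_append (w₁ w₂ : List (Fin c)) :
    Yprod y (w₁ ++ w₂) = Yprod y w₁ * Yprod y w₂ := by
  rw [Yprod, Yprod, Yprod, List.map_append, List.prod_append]

theorem Yprod_cons (j : Fin c) (w : List (Fin c)) :
    Yprod y (j :: w) = (monomial 1 (y j) : R[X]) * Yprod y w := by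
  rw [Yprod, Yprod, List.map_cons, List.prod_cons]

theorem Yprod_eq (w : List (Fin c)) :
    Yprod y w = monomial w.length (w.map y).prod := by
  induction w with
  | nil => simp [Yprod]
  | cons j w ih =>
    rw [Yprod, List.map_cons, List.prod_cons, ← Yprod, ih, monomial_mul_monomial,
      List.map_cons, List.prod_cons, List.length_cons, add_comm 1 w.length]

theorem Yprod_coeff_mem (hJgen : J = Ideal.span (Set.range y)) (w : List (Fin c)) :
    (w.map y).prod ∈ J ^ w.length := by
  induction w with
  | nil => simp [Ideal.one_eq_top]
  | cons j w ih =>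
    rw [List.map_cons, List.prod_cons, List.length_cons, pow_succ, mul_comm]
    refine Ideal.mul_mem_mul ?_ ih
    rw [hJgen]
    exact Ideal.subset_span (Set.mem_range_self j)

theorem Yprod_mem_rees (hJgen : J = Ideal.span (Set.range y)) (w : List (Fin c)) :
    Yprod y w ∈ reesAlgebra J := by
  rw [Yprod_eq]
  exact reesAlgebra.monomial_mem.mpr (Yprod_coeff_mem J y hJgen w)

theorem smul_mem_of_mem_rees {q : R[X]} (hq : q ∈ reesAlgebra J) (f : PolynomialModule R M)
    (W : Submodule (reesAlgebra J) (PolynomialModule R M)) (hf : f ∈ W) : q • f ∈ W := by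
  have : q • f = (⟨q, hq⟩ : reesAlgebra J) • f := rfl
  rw [this]
  exact W.smul_mem _ hf

/-- the auxiliary submodules V_k (the length-k products land in L') -/
noncomputable def Vaux (hp : p.IsPrime) (hJI : J ≤ I) (k : ℕ) :
    Submodule (reesAlgebra J) (PolynomialModule R M) where
  carrier := {f | ∀ w : List (Fin c), w.length = k → Yprod y w • f ∈ Lsub I J N p hp hJI}
  add_mem' := by
    intro f g hf hg w hw
    rw [smul_add]
    exact Submodule.add_mem _ (hf w hw) (hg w hw)
  zero_mem' := by
    intro w hw
    rw [smul_zero]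
    exact Submodule.zero_mem _
  smul_mem' := by
    intro s f hf w hw
    have : Yprod y w • (s • f) = s • (Yprod y w • f) := by
      rw [Subalgebra.smul_def s f, Subalgebra.smul_def s (Yprod y w • f), smul_smul, smul_smul,
        mul_comm]
    rw [this]
    exact Submodule.smul_mem _ _ (hf w hw)

theorem mem_Vaux (hp : p.IsPrime) (hJI : J ≤ I) (k : ℕ) (f : PolynomialModule R M) :
    f ∈ Vaux I J N p y hp hJI k ↔
      ∀ w : List (Fin c), w.length = k → Yprod y w • f ∈ Lsub I J N p hp hJI := Iff.rfl

/-- the spans T_l -/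
noncomputable def Tspan (hJI : J ≤ I) (K l : ℕ) :
    Submodule (reesAlgebra J) (PolynomialModule R M) :=
  Submodule.span (reesAlgebra J)
    {g | ∃ (w : List (Fin c)) (e : PolynomialModule R M),
      min l K ≤ w.length ∧ e ∈ Esub I J N p hJI ∧ g = Yprod y w • e}

theorem Tspan_anti (hJI : J ≤ I) (K : ℕ) {l l' : ℕ} (h : l ≤ l') :
    Tspan I J N p y hJI K l' ≤ Tspan I J N p y hJI K l := by
  refine Submodule.span_mono ?_
  rintro g ⟨w, e, hlen, he, rfl⟩
  exact ⟨w, e, le_trans (by omega) hlen, he, rfl⟩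

/-- multiplication by monomials of Rees degree t maps T_l into T_{l+t} -/
theorem Tspan_monomial_smul (hJgen : J = Ideal.span (Set.range y)) (hJI : J ≤ I) (K : ℕ) :
    ∀ (t : ℕ) (a : R), a ∈ J ^ t → ∀ (l : ℕ) (f : PolynomialModule R M),
      f ∈ Tspan I J N p y hJI K l → (monomial t a : R[X]) • f ∈ Tspan I J N p y hJI K (l + t) := by
  intro t
  induction t with
  | zero =>
    intro a _ l f hf
    have : (monomial 0 a : R[X]) = Polynomial.C a := by simp
    rw [this]
    have hmem : Polynomial.C a ∈ reesAlgebra J := (reesAlgebra J).algebraMap_mem a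
    exact smul_mem_of_mem_rees J hmem f _ hf
  | succ t ih =>
    intro a ha l f hf
    -- first : the b ∈ J case of degree-1 monomials
    have hdeg1 : ∀ b ∈ J, ∀ (l' : ℕ) (g : PolynomialModule R M),
        g ∈ Tspan I J N p y hJI K l' → (monomial 1 b : R[X]) • g ∈ Tspan I J N p y hJI K (l' + 1) := by
      intro b hb
      rw [hJgen] at hb
      refine Submodule.span_induction ?_ ?_ ?_ ?_ hb
      · rintro _ ⟨j, rfl⟩ l' g hg
        -- g in span : induct over span
        refine Submodule.span_induction ?_ ?_ ?_ ?_ hg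
        · rintro _ ⟨w, e, hlen, he, rfl⟩
          refine Submodule.subset_span ?_
          refine ⟨j :: w, e, by simp only [List.length_cons]; omega, he, ?_⟩
          rw [smul_smul, Yprod_cons]
        · rw [smul_zero]; exact Submodule.zero_mem _
        · intro g₁ g₂ _ _ h1 h2
          rw [smul_add]; exact Submodule.add_mem _ h1 h2
        · intro s g₁ _ h1
          have : (monomial 1 (y j) : R[X]) • (s • g₁) = s • ((monomial 1 (y j) : R[X]) • g₁) := by
            rw [Subalgebra.smul_def s g₁, Subalgebra.smul_def s ((monomial 1 (y j) : R[X]) • g₁),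
              smul_smul, smul_smul, mul_comm]
          rw [this]
          exact Submodule.smul_mem _ _ h1
      · intro l' g hg
        have : (monomial 1 (0 : R) : R[X]) = 0 := by simp
        rw [this, zero_smul]
        exact Submodule.zero_mem _
      · intro b₁ b₂ _ _ h1 h2 l' g hg
        have : (monomial 1 (b₁ + b₂) : R[X]) = monomial 1 b₁ + monomial 1 b₂ := by
          rw [map_add]
        rw [this, add_smul]
        exact Submodule.add_mem _ (h1 l' g hg) (h2 l' g hg)
      · intro r b₁ _ h1 l' g hg
        have : (monomial 1 (r • b₁) : R[X]) = Polynomial.C r * monomial 1 b₁ := by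
          rw [Polynomial.C_mul_monomial, smul_eq_mul]
        rw [this, mul_smul]
        exact smul_mem_of_mem_rees J ((reesAlgebra J).algebraMap_mem r) _ _ (h1 l' g hg)
    -- now the J^{t+1} = J^t * J induction
    rw [pow_succ] at ha
    -- property is additive in a
    refine Submodule.mul_induction_on ha ?_ ?_
    · intro b hb b' hb'
      have hsplit : (monomial (t + 1) (b * b') : R[X]) = monomial t b * monomial 1 b' := by
        rw [monomial_mul_monomial]
      rw [hsplit, mul_smul]
      have h2 := ih b hb (l + 1) _ (hdeg1 b' hb' l f hf)
      have hidx : l + 1 + t = l + (t + 1) := by omega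
      rwa [hidx] at h2
    · intro a₁ a₂ h1 h2
      have : (monomial (t + 1) (a₁ + a₂) : R[X]) = monomial (t + 1) a₁ + monomial (t + 1) a₂ := by
        rw [map_add]
      rw [this, add_smul]
      exact Submodule.add_mem _ h1 h2

theorem single_mem_Esub (hJI : J ≤ I) (m : ℕ) (x : M)
    (hx1 : x ∈ (I ^ m • (⊤ : Submodule R M) : Submodule R M))
    (hx2 : ∀ r ∈ p, r • x ∈ (I ^ m • N : Submodule R M)) :
    single R m x ∈ Esub I J N p hJI := by
  rw [mem_Esub]
  intro i
  rw [pm_single_apply]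
  by_cases h : m = i
  · subst h
    rw [if_pos rfl]
    exact ⟨hx1, hx2⟩
  · rw [if_neg h]
    exact ⟨Submodule.zero_mem _, fun r hr => by rw [smul_zero]; exact Submodule.zero_mem _⟩

theorem Esub_single (hJI : J ≤ I) (f : PolynomialModule R M)
    (hf : f ∈ Esub I J N p hJI) (m : ℕ) : single R m (f m) ∈ Esub I J N p hJI :=
  single_mem_Esub I J N p hJI m (f m) ((hf m).1) ((hf m).2)

theorem single_mem_Lsub_iff (hp : p.IsPrime) (hJI : J ≤ I) (m : ℕ) (x : M) :
    single R m x ∈ Lsub I J N p hp hJI ↔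
      ∃ r : R, r ∉ p ∧ r • x ∈ (I ^ m • N : Submodule R M) := by
  rw [mem_Lsub]
  constructor
  · rintro ⟨r, hr, hri⟩
    refine ⟨r, hr, ?_⟩
    have := hri m
    rwa [pm_single_apply, if_pos rfl] at this
  · rintro ⟨r, hr, hrx⟩
    refine ⟨r, hr, fun i => ?_⟩
    rw [pm_single_apply]
    by_cases h : m = i
    · subst h; rwa [if_pos rfl]
    · rw [if_neg h, smul_zero]; exact Submodule.zero_mem _
theorem single_mem_Fsub (hJI : J ≤ I) (m : ℕ) (x : M)
    (hx : x ∈ (I ^ m • (⊤ : Submodule R M) : Submodule R M)) :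
    single R m x ∈ Fsub I J hJI := by
  rw [mem_Fsub]
  intro i
  rw [pm_single_apply]
  by_cases h : m = i
  · subst h; rwa [if_pos rfl]
  · rw [if_neg h]; exact Submodule.zero_mem _

theorem rsmul_mem_rees_submodule (r : R) (f : PolynomialModule R M)
    (W : Submodule (reesAlgebra J) (PolynomialModule R M)) (hf : f ∈ W) : r • f ∈ W := by
  have h : r • f = (Polynomial.C r : R[X]) • f := by
    rw [← Polynomial.algebraMap_eq, algebraMap_smul]
  rw [h]
  exact smul_mem_of_mem_rees J ((reesAlgebra J).algebraMap_mem r) f W hf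

theorem Fsub_le_span (hJI : J ≤ I) (m0 : ℕ)
    (hJIn : ∀ n, m0 ≤ n → J * I ^ n = I ^ (n + 1)) :
    Fsub I J hJI ≤ Submodule.span (reesAlgebra J)
      (⋃ (i : ℕ) (_ : i ≤ m0),
        single R i '' ((I ^ i • (⊤ : Submodule R M) : Submodule R M) : Set M)) := by
  have key : ∀ (i : ℕ) (x : M), x ∈ (I ^ i • (⊤ : Submodule R M) : Submodule R M) →
      single R i x ∈ Submodule.span (reesAlgebra J)
        (⋃ (i : ℕ) (_ : i ≤ m0),
          single R i '' ((I ^ i • (⊤ : Submodule R M) : Submodule R M) : Set M)) := by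
    intro i
    induction i using Nat.strong_induction_on with
    | _ i ih =>
      intro x hx
      by_cases h : i ≤ m0
      · refine Submodule.subset_span ?_
        exact Set.mem_iUnion.mpr ⟨i, Set.mem_iUnion.mpr ⟨h, Set.mem_image_of_mem _ hx⟩⟩
      · push_neg at h
        have hi : (I ^ i • (⊤ : Submodule R M) : Submodule R M) = J • (I ^ (i-1) • ⊤) := by
          have h1 : J • (I ^ (i-1) • (⊤ : Submodule R M)) = (J * I ^ (i-1)) • ⊤ :=
            (Submodule.smul_assoc _ _ _).symm
          rw [h1, hJIn (i-1) (by omega), show i - 1 + 1 = i from by omega]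
        rw [hi] at hx
        refine Submodule.smul_induction_on hx ?_ ?_
        · intro b hb z hz
          have hidx : 1 + (i - 1) = i := by omega
          have heq : single R i (b • z) = (monomial 1 b : R[X]) • single R (i-1) z := by
            rw [PolynomialModule.monomial_smul_single, hidx]
          rw [heq]
          exact smul_mem_of_mem_rees J (reesAlgebra.monomial_mem.mpr (by rwa [pow_one])) _ _
            (ih (i-1) (by omega) z hz)
        · intro u v hu hv
          rw [PolynomialModule.single_add]
          exact Submodule.add_mem _ hu hv
  intro f hf
  rw [← pm_sum_single f]
  refine Submodule.sum_mem _ ?_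
  rintro i -
  exact key i (f i) (hf i)

theorem Fsub_fg [IsNoetherianRing R] [Module.Finite R M] (hJI : J ≤ I) (m0 : ℕ)
    (hJIn : ∀ n, m0 ≤ n → J * I ^ n = I ^ (n + 1)) : (Fsub (M := M) I J hJI).FG := by
  classical
  have hfg : ∀ i : ℕ, ∃ s : Finset M,
      Submodule.span R (↑s : Set M) = (I ^ i • ⊤ : Submodule R M) := fun i =>
    IsNoetherian.noetherian _
  choose gens hgens using hfg
  rw [Submodule.fg_def]
  refine ⟨⋃ (i : ℕ) (_ : i ≤ m0), single R i '' ((gens i : Finset M) : Set M), ?_, ?_⟩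
  · refine Set.Finite.biUnion (Set.finite_Iic m0) ?_
    intro i _
    exact ((gens i).finite_toSet).image _
  · refine le_antisymm ?_ ?_
    · rw [Submodule.span_le]
      rintro g hg
      simp only [Set.mem_iUnion] at hg
      obtain ⟨i, hi, z, hz, rfl⟩ := hg
      refine single_mem_Fsub I J hJI i z ?_
      rw [← hgens i]
      exact Submodule.subset_span hz
    · refine le_trans (Fsub_le_span I J hJI m0 hJIn) ?_
      rw [Submodule.span_le]
      rintro g hg
      simp only [Set.mem_iUnion] at hg
      obtain ⟨i, hi, z, hz, rfl⟩ := hg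
      have hz' : z ∈ Submodule.span R ((gens i : Finset M) : Set M) := by rw [hgens i]; exact hz
      have : ∀ z' ∈ Submodule.span R ((gens i : Finset M) : Set M),
          single R i z' ∈ Submodule.span (reesAlgebra J)
            (⋃ (i : ℕ) (_ : i ≤ m0), single R i '' ((gens i : Finset M) : Set M)) := by
        intro z' hz'
        refine Submodule.span_induction ?_ ?_ ?_ ?_ hz'
        · intro w hw
          exact Submodule.subset_span
            (Set.mem_iUnion.mpr ⟨i, Set.mem_iUnion.mpr ⟨hi, Set.mem_image_of_mem _ hw⟩⟩)
        · rw [PolynomialModule.single_zero]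
          exact Submodule.zero_mem _
        · intro u v _ _ hu hv
          rw [PolynomialModule.single_add]
          exact Submodule.add_mem _ hu hv
        · intro r u _ hu
          rw [PolynomialModule.single_smul]
          exact rsmul_mem_rees_submodule J r _ _ hu
      exact this z hz'


end ReesPart

section ListGrade

variable {R : Type*} [CommRing R] (𝒜 : ℤ → AddSubgroup R) [GradedRing 𝒜]
variable {c : ℕ} (y : Fin c → R) (d : Fin c → ℤ)

theorem list_prod_mem_grade (hy : ∀ j, y j ∈ 𝒜 (d j)) (w : List (Fin c)) :
    (w.map y).prod ∈ 𝒜 ((w.map d).sum) := by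
  induction w with
  | nil => simpa using SetLike.one_mem_graded 𝒜
  | cons j w ih =>
    simp only [List.map_cons, List.prod_cons, List.sum_cons]
    exact SetLike.mul_mem_graded (hy j) ih

end ListGrade

open DirectSum Polynomial PolynomialModule in
/-- Same setup as Statement 9.  If `p` is a prime ideal with
`p ∈ Ass_R(I^n M / I^n N)` for all sufficiently large `n`, then `p ∈ Ass_R(M / I^n N)` for
all sufficiently large `n`, and there are `a ∈ {d 1, …, d c}` and `b ∈ ℤ` with
`v_p(M / I^n N) ≤ a * n + b` for all sufficiently large `n`, where `v_p(M / I^n N)` is the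
least degree of a homogeneous `x ∈ M` with `p = (I^n N :_R x)`. -/
theorem v_number_at_prime_of_M_mod_InN_linearly_bounded
    {R M : Type*} [CommRing R] [IsNoetherianRing R]
    [AddCommGroup M] [Module R M] [Module.Finite R M]
    (𝒜 : ℤ → AddSubgroup R) (ℳ : ℤ → AddSubgroup M)
    [GradedRing 𝒜] [DirectSum.Decomposition ℳ]
    (hsmul : ∀ (i j : ℤ), ∀ r ∈ 𝒜 i, ∀ x ∈ ℳ j, r • x ∈ ℳ (i + j))
    (hA : ∀ i : ℤ, i < 0 → 𝒜 i = ⊥)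
    (I : Ideal R) (hI : Ideal.IsHomogeneous 𝒜 I)
    (N : Submodule R M) (hN : ∀ x ∈ N, ∀ i : ℤ, (DirectSum.decompose ℳ x i : M) ∈ N)
    (c : ℕ) (y : Fin c → R) (d : Fin c → ℤ) (hdmono : Monotone d)
    (hy : ∀ j, y j ∈ 𝒜 (d j))
    (J : Ideal R) (hJgen : J = Ideal.span (Set.range y)) (hJI : J ≤ I)
    (m0 : ℕ) (hred : J * I ^ m0 = I ^ (m0 + 1))
    (p : Ideal R) (hp : p.IsPrime)
    (hass : ∃ n₀ : ℕ, ∀ n ≥ n₀, ∃ x ∈ (I ^ n • ⊤ : Submodule R M),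
      ∀ r : R, r ∈ p ↔ r • x ∈ (I ^ n • N : Submodule R M)) :
    (∃ n₁ : ℕ, ∀ n ≥ n₁, ∃ x : M,
      ∀ r : R, r ∈ p ↔ r • x ∈ (I ^ n • N : Submodule R M)) ∧
    ∃ j : Fin c, ∃ b : ℤ, ∃ n₂ : ℕ, ∀ n ≥ n₂,
      sInf {u : ℤ | ∃ x ∈ ℳ u,
        ∀ r : R, r ∈ p ↔ r • x ∈ (I ^ n • N : Submodule R M)} ≤ d j * (n : ℤ) + b := by
  classical
  obtain ⟨n₀, hwit⟩ := hass
  have h1notp : (1 : R) ∉ p := fun h => hp.ne_top ((Ideal.eq_top_iff_one p).mpr h)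
  -- graded facts
  have hLgr : ∀ n : ℕ, ∀ x ∈ (I ^ n • N : Submodule R M), ∀ i : ℤ,
      (DirectSum.decompose ℳ x i : M) ∈ (I ^ n • N : Submodule R M) :=
    fun n => graded_smul_mem 𝒜 ℳ hsmul (homog_pow 𝒜 hI n) hN
  have hTgr : ∀ n : ℕ, ∀ x ∈ (I ^ n • ⊤ : Submodule R M), ∀ i : ℤ,
      (DirectSum.decompose ℳ x i : M) ∈ (I ^ n • ⊤ : Submodule R M) :=
    fun n => graded_smul_mem 𝒜 ℳ hsmul (homog_pow 𝒜 hI n)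
      (fun x _ i => Submodule.mem_top)
  constructor
  · exact ⟨n₀, fun n hn => by obtain ⟨x, _, hx⟩ := hwit n hn; exact ⟨x, hx⟩⟩
  -- c = 0 : contradiction
  rcases Nat.eq_zero_or_pos c with hc | hc
  · exfalso
    subst hc
    have hJbot : J = ⊥ := by
      rw [hJgen, Set.range_eq_empty, Ideal.span_empty]
    have hIbot : I ^ (m0 + 1) = ⊥ := by
      rw [← hred, hJbot]
      simp
    set n := max n₀ (m0 + 1) with hn
    obtain ⟨x, hxF, hx⟩ := hwit n (le_max_left _ _)
    have hx0 : x = 0 := by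
      have h1 : I ^ n ≤ I ^ (m0 + 1) := Ideal.pow_le_pow_right (le_max_right _ _)
      rw [hIbot, le_bot_iff] at h1
      rw [h1, Submodule.bot_smul, Submodule.mem_bot] at hxF
      exact hxF
    exact h1notp ((hx 1).mpr (by rw [hx0, smul_zero]; exact Submodule.zero_mem _))
  -- lower degree bound u₀
  obtain ⟨sgen, hsgen⟩ := Module.Finite.fg_top (R := R) (M := M)
  set B : Finset ℤ := sgen.biUnion (fun g => (DirectSum.decompose ℳ g).support) with hBdef
  set u₀ : ℤ := if h : B.Nonempty then B.min' h else 0 with hu₀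
  have hMbot : ∀ u : ℤ, u < u₀ → ∀ x ∈ ℳ u, x = 0 := by
    intro u hu x hx
    have hM₀ : ∀ m : M, ∀ i : ℤ, i < u₀ → (DirectSum.decompose ℳ m i : M) = 0 := by
      intro m
      have hm : m ∈ (⊤ : Submodule R M) := trivial
      rw [← hsgen] at hm
      refine Submodule.span_induction ?_ ?_ ?_ ?_ hm
      · intro g hg i hi
        by_contra h0
        have hiB : i ∈ B := Finset.mem_biUnion.mpr ⟨g, hg,
          DFinsupp.mem_support_iff.mpr (fun hh => h0 (by rw [hh]; rfl))⟩
        have hne : B.Nonempty := ⟨i, hiB⟩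
        have hle : u₀ ≤ i := by
          rw [hu₀, dif_pos hne]
          exact Finset.min'_le B i hiB
        omega
      · intro i _
        rw [DirectSum.decompose_zero]
        rfl
      · intro u' v' _ _ hu' hv' i hi
        rw [DirectSum.decompose_add, DirectSum.add_apply, AddSubgroup.coe_add, hu' i hi,
          hv' i hi, add_zero]
      · intro r m' _ hm' i hi
        have hrw : r • m' = ∑ k ∈ (DirectSum.decompose 𝒜 r).support,
            ((DirectSum.decompose 𝒜 r k : R)) • m' := by
          rw [← Finset.sum_smul]
          congr 1
          exact (DirectSum.sum_support_decompose 𝒜 r).symm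
        rw [hrw, decompose_coe_sum]
        refine Finset.sum_eq_zero (fun k _ => ?_)
        rcases lt_or_ge k 0 with hk | hk
        · have : (DirectSum.decompose 𝒜 r k : R) = 0 := by
            have h2 : (DirectSum.decompose 𝒜 r k : R) ∈ (⊥ : AddSubgroup R) := by
              rw [← hA k hk]
              exact SetLike.coe_mem _
            simpa using h2
          rw [this, zero_smul]
          exact (DirectSum.decompose_zero ℳ) ▸ rfl
        · rw [hdec_lemma 𝒜 ℳ hsmul (SetLike.coe_mem _) m' i, hm' (i - k) (by omega),
            smul_zero]
    have := hM₀ x u hu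
    rwa [DirectSum.decompose_of_mem_same ℳ hx] at this
  have hbdd : ∀ n : ℕ, BddBelow {u : ℤ | ∃ x ∈ ℳ u,
      ∀ r : R, r ∈ p ↔ r • x ∈ (I ^ n • N : Submodule R M)} := by
    intro n
    refine ⟨u₀, fun u hu => ?_⟩
    obtain ⟨x, hxu, hx⟩ := hu
    by_contra h
    push_neg at h
    exact h1notp ((hx 1).mpr (by rw [hMbot u h x hxu, smul_zero]; exact Submodule.zero_mem _))
  -- max degree generator
  set jmax : Fin c := ⟨c - 1, by omega⟩ with hjmaxdef
  have hdmax : ∀ j : Fin c, d j ≤ d jmax := fun j => hdmono (by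
    rw [Fin.le_def]
    simp only [hjmaxdef]
    omega)
  -- stability of powers
  have hJIn : ∀ n, m0 ≤ n → J * I ^ n = I ^ (n + 1) := by
    intro n hn
    induction n, hn using Nat.le_induction with
    | base => exact hred
    | succ n hn ih => rw [pow_succ, ← mul_assoc, ih, ← pow_succ]
  -- Noetherian setup
  have hFfg := Fsub_fg (M := M) I J hJI m0 hJIn
  haveI instN : IsNoetherian (reesAlgebra J) ↥(Fsub (M := M) I J hJI) :=
    isNoetherian_of_fg_of_noetherian _ hFfg
  have hEleFF : Esub I J N p hJI ≤ Fsub (M := M) I J hJI := fun f hf i => (hf i).1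
  have hVAleFF : ∀ k : ℕ, Esub I J N p hJI ⊓ Vaux I J N p y hp hJI k ≤ Fsub (M := M) I J hJI :=
    fun k => le_trans inf_le_left hEleFF
  have hVVmono : ∀ {k k' : ℕ}, k ≤ k' →
      Esub I J N p hJI ⊓ Vaux I J N p y hp hJI k ≤ Esub I J N p hJI ⊓ Vaux I J N p y hp hJI k' := by
    have hstep : ∀ k : ℕ, Esub I J N p hJI ⊓ Vaux I J N p y hp hJI k ≤
        Esub I J N p hJI ⊓ Vaux I J N p y hp hJI (k + 1) := by
      intro k f hf
      refine ⟨hf.1, ?_⟩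
      intro w hwl
      cases w with
      | nil => simp at hwl
      | cons j w' =>
        rw [Yprod_cons, mul_smul]
        refine smul_mem_of_mem_rees J (reesAlgebra.monomial_mem.mpr
          (by rw [pow_one, hJgen]; exact Ideal.subset_span (Set.mem_range_self j))) _ _ ?_
        exact hf.2 w' (by simpa using hwl)
    intro k k' hk
    exact monotone_nat_of_le_succ hstep hk
  -- the stabilizing chain
  obtain ⟨K, hK⟩ := monotone_stabilizes_iff_noetherian.mpr instN
    ⟨fun k => Submodule.comap (Fsub (M := M) I J hJI).subtype
      (Esub I J N p hJI ⊓ Vaux I J N p y hp hJI k),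
      fun k k' hk => Submodule.comap_mono (hVVmono hk)⟩
  have hVVstab : ∀ k, K ≤ k →
      Esub I J N p hJI ⊓ Vaux I J N p y hp hJI K = Esub I J N p hJI ⊓ Vaux I J N p y hp hJI k := by
    intro k hk
    have h := hK k hk
    change Submodule.comap (Fsub (M := M) I J hJI).subtype (Esub I J N p hJI ⊓ Vaux I J N p y hp hJI K) =
      Submodule.comap (Fsub (M := M) I J hJI).subtype (Esub I J N p hJI ⊓ Vaux I J N p y hp hJI k) at h
    have h2 := congrArg (Submodule.map (Fsub (M := M) I J hJI).subtype) h
    rwa [Submodule.map_comap_subtype, Submodule.map_comap_subtype,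
      inf_eq_right.mpr (hVAleFF K), inf_eq_right.mpr (hVAleFF k)] at h2
  by_cases hEV : Esub I J N p hJI ≤ Esub I J N p hJI ⊓ Vaux I J N p y hp hJI K
  · -- CASE A : contradiction
    exfalso
    -- E is finitely generated
    have hEfg : (Esub I J N p hJI).FG := by
      have h1 : (Submodule.comap (Fsub (M := M) I J hJI).subtype (Esub I J N p hJI)).FG :=
        IsNoetherian.noetherian _
      have h2 := h1.map (Fsub (M := M) I J hJI).subtype
      rwa [Submodule.map_comap_subtype, inf_eq_right.mpr hEleFF] at h2
    obtain ⟨G', hG'⟩ := hEfg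
    set D : ℕ := G'.sup (fun g => g.coeff.support.sup id) with hDdef
    have hD : ∀ g ∈ G', ∀ m : ℕ, D < m → g m = 0 := by
      intro g hg m hm
      rw [← Finsupp.notMem_support_iff]
      intro hmem
      have h1 : id m ≤ g.coeff.support.sup id := Finset.le_sup hmem
      have h2 : g.coeff.support.sup id ≤ D := Finset.le_sup (f := fun g => g.coeff.support.sup id) hg
      simp only [id] at h1
      omega
    -- every coefficient single of an element of E is in T (m - D)
    have hP : ∀ f ∈ Esub I J N p hJI, ∀ m : ℕ,
        single R m (f m) ∈ Tspan I J N p y hJI K (m - D) := by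
      intro f hf
      rw [← hG'] at hf
      refine Submodule.span_induction ?_ ?_ ?_ ?_ hf
      · intro g hg m
        rcases le_or_gt m D with h | h
        · have hge : single R m (g m) ∈ Esub I J N p hJI := by
            refine Esub_single I J N p hJI g ?_ m
            rw [← hG']
            exact Submodule.subset_span hg
          refine Submodule.subset_span ?_
          exact ⟨[], single R m (g m), by simp only [List.length_nil]; omega, hge, by rw [Yprod]; simp⟩
        · rw [hD g hg m h, PolynomialModule.single_zero]
          exact Submodule.zero_mem _
      · intro m
        rw [PolynomialModule.zero_apply, PolynomialModule.single_zero]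
        exact Submodule.zero_mem _
      · intro u v _ _ hu hv m
        rw [PolynomialModule.add_apply, PolynomialModule.single_add]
        exact Submodule.add_mem _ (hu m) (hv m)
      · intro s f' _ hf' m
        rw [Subalgebra.smul_def, PolynomialModule.smul_apply, pm_single_sum]
        refine Submodule.sum_mem _ ?_
        rintro ⟨t, q⟩ ht
        rw [Finset.HasAntidiagonal.mem_antidiagonal] at ht
        subst ht
        rw [← PolynomialModule.monomial_smul_single]
        have h1 := Tspan_monomial_smul I J N p y hJgen hJI K t ((s : R[X]).coeff t)
          ((mem_reesAlgebra_iff J (s : R[X])).mp s.2 t) (q - D) _ (hf' q)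
        refine Tspan_anti I J N p y hJI K (by omega) h1
    -- T l ⊆ L' for l ≥ K
    have hTKle : ∀ l : ℕ, K ≤ l → Tspan I J N p y hJI K l ≤ Lsub I J N p hp hJI := by
      intro l hl
      rw [Tspan, Submodule.span_le]
      rintro g ⟨w, e, hlen, he, rfl⟩
      rw [min_eq_right hl] at hlen
      have hsplit : w = w.take K ++ w.drop K := (List.take_append_drop _ _).symm
      rw [hsplit, Yprod_append, mul_smul]
      have hinner : Yprod y (w.drop K) • e ∈ Esub I J N p hJI :=
        smul_mem_of_mem_rees J (Yprod_mem_rees J y hJgen _) _ _ he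
      have hVK := hEV hinner
      exact hVK.2 (w.take K) (by rw [List.length_take]; omega)
    -- homogeneous witness at level n₀ + D + K
    set n : ℕ := n₀ + D + K with hndef
    obtain ⟨x₀, hx₀F, hx₀⟩ := hwit n (by omega)
    obtain ⟨iw, hiw⟩ := component_colon_witness 𝒜 ℳ hsmul (hLgr n) hp x₀ hx₀
    set x : M := (DirectSum.decompose ℳ x₀ iw : M) with hxdef
    have hxF : x ∈ (I ^ n • ⊤ : Submodule R M) := hTgr n x₀ hx₀F iw
    have hsingleE : single R n x ∈ Esub I J N p hJI :=
      single_mem_Esub I J N p hJI n x hxF (fun r hr => (hiw r).mp hr)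
    have hTT := hP _ hsingleE n
    have hsx : (single R n x : PolynomialModule R M) n = x := by
      rw [pm_single_apply, if_pos rfl]
    rw [hsx] at hTT
    have hLx := hTKle (n - D) (by omega) hTT
    rw [single_mem_Lsub_iff] at hLx
    obtain ⟨r, hrp, hrx⟩ := hLx
    exact hrp ((hiw r).mpr hrx)
  · -- CASE B : construct the witnesses
    rw [SetLike.not_le_iff_exists] at hEV
    obtain ⟨f, hfE, hfV⟩ := hEV
    have hfV' : f ∉ Esub I J N p hJI ⊓ Vaux I J N p y hp hJI K := fun h => hfV h
    have hm : ∃ m : ℕ, single R m (f m) ∉ Esub I J N p hJI ⊓ Vaux I J N p y hp hJI K := by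
      by_contra hall
      push_neg at hall
      apply hfV'
      rw [← pm_sum_single f]
      exact Submodule.sum_mem _ (fun m _ => hall m)
    obtain ⟨m, hmV⟩ := hm
    have hmE : single R m (f m) ∈ Esub I J N p hJI := Esub_single I J N p hJI f hfE m
    set x' : M := f m with hx'def
    have hx'0 : x' ≠ 0 := by
      intro h
      apply hmV
      have : single R m (f m) = 0 := by rw [← hx'def, h, PolynomialModule.single_zero]
      rw [this]
      exact Submodule.zero_mem _
    have hsupp' : (DirectSum.decompose ℳ x').support.Nonempty := by
      by_contra h
      apply hx'0
      conv_lhs => rw [← DirectSum.sum_support_decompose ℳ x']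
      rw [Finset.not_nonempty_iff_eq_empty.mp h, Finset.sum_empty]
    set U₀ : ℤ := (DirectSum.decompose ℳ x').support.max' hsupp' with hU₀def
    refine ⟨jmax, U₀ - d jmax * m, m, ?_⟩
    intro n hn
    set k : ℕ := n - m with hkdef
    have hkm : k + m = n := by omega
    have hnotV : single R m x' ∉ Esub I J N p hJI ⊓ Vaux I J N p y hp hJI k := by
      intro hmem
      rcases le_or_gt k K with h | h
      · exact hmV (hVVmono h hmem)
      · rw [← hVVstab k h.le] at hmem
        exact hmV hmem
    have hw : ∃ w : List (Fin c), w.length = k ∧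
        Yprod y w • single R m x' ∉ Lsub I J N p hp hJI := by
      by_contra hall
      push_neg at hall
      exact hnotV ⟨hmE, fun w hwl => hall w hwl⟩
    obtain ⟨w, hwl, hwnot⟩ := hw
    set z : M := (w.map y).prod • x' with hzdef
    have hsingle_eq : Yprod y w • single R m x' = single R n z := by
      rw [Yprod_eq, PolynomialModule.monomial_smul_single, hwl, hkm]
    have hzE : single R n z ∈ Esub I J N p hJI := by
      rw [← hsingle_eq]
      exact smul_mem_of_mem_rees J (Yprod_mem_rees J y hJgen w) _ _ hmE
    have hzn : (single R n z : PolynomialModule R M) n = z := by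
      rw [pm_single_apply, if_pos rfl]
    have hcolz : ∀ r : R, r ∈ p ↔ r • z ∈ (I ^ n • N : Submodule R M) := by
      intro r
      constructor
      · intro hr
        have := (hzE n).2 r hr
        rwa [hzn] at this
      · intro hrz
        by_contra hrp
        apply hwnot
        rw [hsingle_eq, single_mem_Lsub_iff]
        exact ⟨r, hrp, hrz⟩
    obtain ⟨v, hv⟩ := component_colon_witness 𝒜 ℳ hsmul (hLgr n) hp z hcolz
    have hzvne : (DirectSum.decompose ℳ z v : M) ≠ 0 := by
      intro h
      exact h1notp ((hv 1).mpr (by rw [one_smul, h]; exact Submodule.zero_mem _))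
    -- degree bookkeeping
    have hgr : (w.map y).prod ∈ 𝒜 ((w.map d).sum) := list_prod_mem_grade 𝒜 y d hy w
    have hdecz : (DirectSum.decompose ℳ z v : M) =
        (w.map y).prod • (DirectSum.decompose ℳ x' (v - (w.map d).sum) : M) :=
      hdec_lemma 𝒜 ℳ hsmul hgr x' v
    have hvsupp : v - (w.map d).sum ∈ (DirectSum.decompose ℳ x').support := by
      rw [DFinsupp.mem_support_iff]
      intro h0
      apply hzvne
      rw [hdecz, h0]
      simp
    have hvle : v - (w.map d).sum ≤ U₀ := Finset.le_max' _ _ hvsupp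
    have hsumle : (w.map d).sum ≤ (k : ℤ) * d jmax := by
      have h1 : (w.map d).sum ≤ (w.map d).length • d jmax := by
        refine List.sum_le_card_nsmul _ _ ?_
        intro a ha
        obtain ⟨j, _, rfl⟩ := List.mem_map.mp ha
        exact hdmax j
      rwa [List.length_map, hwl, nsmul_eq_mul] at h1
    have hfinal : v ≤ d jmax * (n : ℤ) + (U₀ - d jmax * m) := by
      have hk' : (k : ℤ) = (n : ℤ) - (m : ℤ) := by omega
      have heq : (k : ℤ) * d jmax + U₀ = d jmax * (n : ℤ) + (U₀ - d jmax * (m : ℤ)) := by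
        rw [hk']; ring
      linarith [hvle, hsumle]
    refine le_trans (csInf_le (hbdd n) ?_) hfinal
    exact ⟨(DirectSum.decompose ℳ z v : M), SetLike.coe_mem _, hv⟩
end

section
/- Assume (0 :_M I) = 0, and let u be a homogeneous ideal of R with I ⊆ u. Then there exists n₀ such that for all n ≥ n₀ one has (I^{n+1} N :_M u) ⊆ I^n M; consequently (I^{n+1} N :_M u) = (I^{n+1} N :_{I^n M} u) for all n ≥ n₀, i.e. the annihilator of u in M/I^{n+1}N coincides with the annihilator of u in I^n M/I^{n+1}N. -/
open Polynomial PolynomialModule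
open scoped Polynomial

namespace ARG

universe u v

variable {R : Type u} {M : Type v} [CommRing R] [AddCommGroup M] [Module R M]

/-- A copy of `Ideal.Filtration` with independent universes for `R` and `M`. -/
structure Filtration (I : Ideal R) (M : Type v) [AddCommGroup M] [Module R M] where
  N : ℕ → Submodule R M
  mono : ∀ i, N (i + 1) ≤ N i
  smul_le : ∀ i, I • N i ≤ N (i + 1)

variable {I : Ideal R} (F F' : Filtration I M)

namespace Filtration

theorem pow_smul_le (i j : ℕ) : I ^ i • F.N j ≤ F.N (i + j) := by
  induction' i with _ ih
  · simp
  · rw [pow_succ', mul_smul, add_assoc, add_comm 1, ← add_assoc]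
    exact (smul_mono_right _ ih).trans (F.smul_le _)

theorem pow_smul_le_pow_smul (i j k : ℕ) : I ^ (i + k) • F.N j ≤ I ^ k • F.N (i + j) := by
  rw [add_comm, pow_add, mul_smul]
  exact smul_mono_right _ (F.pow_smul_le i j)

protected theorem antitone : Antitone F.N :=
  antitone_nat_of_succ_le F.mono

/-- An `I` filtration is stable if `I • F.N n = F.N (n+1)` for large enough `n`. -/
def Stable : Prop :=
  ∃ n₀, ∀ n ≥ n₀, I • F.N n = F.N (n + 1)

/-- The `R[IX]`-submodule of `M[X]` associated with an `I`-filtration. -/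
protected def submodule : Submodule (reesAlgebra I) (PolynomialModule R M) where
  carrier := { f | ∀ i, f.coeff i ∈ F.N i }
  add_mem' hf hg i := Submodule.add_mem _ (hf i) (hg i)
  zero_mem' _ := Submodule.zero_mem _
  smul_mem' r f hf i := by
    rw [Subalgebra.smul_def, PolynomialModule.smul_apply]
    apply Submodule.sum_mem
    rintro ⟨j, k⟩ e
    rw [Finset.HasAntidiagonal.mem_antidiagonal] at e
    subst e
    exact F.pow_smul_le j k (Submodule.smul_mem_smul (r.2 j) (hf k))

@[simp]
theorem mem_submodule (f : PolynomialModule R M) : f ∈ F.submodule ↔ ∀ i, f.coeff i ∈ F.N i :=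
  Iff.rfl

theorem submodule_closure_single :
    AddSubmonoid.closure (⋃ i, single R i '' (F.N i : Set M)) = F.submodule.toAddSubmonoid := by
  apply le_antisymm
  · rw [AddSubmonoid.closure_le, Set.iUnion_subset_iff]
    rintro i _ ⟨m, hm, rfl⟩ j
    rw [coeff_single, Finsupp.single_apply]
    split_ifs with h
    · rwa [← h]
    · exact (F.N j).zero_mem
  · intro f hf
    rw [← f.ofCoeff_coeff, ← f.coeff.sum_single, ofCoeff_finsuppSum]
    apply AddSubmonoid.sum_mem _ _
    rintro c -
    exact AddSubmonoid.subset_closure (Set.subset_iUnion _ c <| Set.mem_image_of_mem _ (hf c))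

theorem submodule_span_single :
    Submodule.span (reesAlgebra I) (⋃ i, single R i '' (F.N i : Set M)) = F.submodule := by
  rw [← Submodule.span_closure, submodule_closure_single, Submodule.coe_toAddSubmonoid]
  exact Submodule.span_eq F.submodule

theorem submodule_eq_span_le_iff_stable_ge (n₀ : ℕ) :
    F.submodule = Submodule.span _ (⋃ i ≤ n₀, single R i '' (F.N i : Set M)) ↔
      ∀ n ≥ n₀, I • F.N n = F.N (n + 1) := by
  rw [← submodule_span_single, ← LE.le.ge_iff_eq', Submodule.span_le, Set.iUnion_subset_iff]
  swap; · exact Submodule.span_mono (Set.iUnion₂_subset_iUnion _ _)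
  constructor
  · intro H n hn
    refine (F.smul_le n).antisymm ?_
    intro x hx
    obtain ⟨l, hl⟩ := (Finsupp.mem_span_iff_linearCombination _ _ _).mp (H _ ⟨x, hx, rfl⟩)
    replace hl := congr_arg (fun f : PolynomialModule R M => f.coeff (n + 1)) hl
    rw [PolynomialModule.coeff_single, Finsupp.single_apply, if_pos rfl] at hl
    rw [← hl, Finsupp.linearCombination_apply, PolynomialModule.coeff_finsuppSum, Finsupp.sum_apply]
    apply Submodule.sum_mem _ _
    rintro ⟨_, _, ⟨n', rfl⟩, _, ⟨hn', rfl⟩, m, hm, rfl⟩ -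
    dsimp only [Subtype.coe_mk]
    rw [Subalgebra.smul_def, smul_single_apply, if_pos (show n' ≤ n + 1 by omega)]
    have e : n' ≤ n := by omega
    have := F.pow_smul_le_pow_smul (n - n') n' 1
    rw [tsub_add_cancel_of_le e, pow_one, add_comm _ 1, ← add_tsub_assoc_of_le e, add_comm] at this
    exact this (Submodule.smul_mem_smul ((l _).2 <| n + 1 - n') hm)
  · let F' := Submodule.span (reesAlgebra I) (⋃ i ≤ n₀, single R i '' (F.N i : Set M))
    intro hF i
    have : ∀ i ≤ n₀, single R i '' (F.N i : Set M) ⊆ F' := by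
      intro i hi
      refine Set.Subset.trans ?_ Submodule.subset_span
      refine @Set.subset_iUnion₂ _ _ _ (fun i => fun _ => ↑((single R i) '' ((N F i) : Set M))) i ?_
      exact hi
    induction' i with j hj
    · exact this _ (Nat.zero_le _)
    by_cases hj' : j.succ ≤ n₀
    · exact this _ hj'
    simp only [not_le, Nat.lt_succ_iff] at hj'
    rw [← hF _ hj']
    rintro _ ⟨m, hm, rfl⟩
    refine Submodule.smul_induction_on hm (fun r hr m' hm' => ?_) (fun x y hx hy => ?_)
    · rw [add_comm, ← monomial_smul_single]
      exact F'.smul_mem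
        ⟨_, reesAlgebra.monomial_mem.mpr (by rwa [pow_one])⟩ (hj <| Set.mem_image_of_mem _ hm')
    · rw [PolynomialModule.single_add]
      exact F'.add_mem hx hy

/-- If the components of a filtration are finitely generated, then the filtration is stable iff
its associated submodule is finitely generated. -/
theorem submodule_fg_iff_stable (hF' : ∀ i, (F.N i).FG) : F.submodule.FG ↔ F.Stable := by
  classical
  delta Filtration.Stable
  simp_rw [← F.submodule_eq_span_le_iff_stable_ge]
  constructor
  · rintro H
    refine H.stabilizes_of_iSup_eq
        ⟨fun n₀ => Submodule.span _ (⋃ (i : ℕ) (_ : i ≤ n₀), single R i '' ↑(F.N i)), ?_⟩ ?_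
    · intro n m e
      rw [Submodule.span_le, Set.iUnion₂_subset_iff]
      intro i hi
      refine Set.Subset.trans ?_ Submodule.subset_span
      refine @Set.subset_iUnion₂ _ _ _ (fun i => fun _ => ↑((single R i) '' ((N F i) : Set M))) i ?_
      exact hi.trans e
    · change (⨆ n₀, Submodule.span (reesAlgebra I) (⋃ (i : ℕ) (_ : i ≤ n₀), single R i '' (F.N i : Set M))) = _
      rw [← Submodule.span_iUnion, ← submodule_span_single]
      congr 1
      ext
      simp only [Set.mem_iUnion, Set.mem_image, SetLike.mem_coe, exists_prop]
      constructor
      · rintro ⟨-, i, -, e⟩; exact ⟨i, e⟩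
      · rintro ⟨i, e⟩; exact ⟨i, i, le_refl i, e⟩
  · rintro ⟨n, hn⟩
    rw [hn]
    simp_rw [Submodule.span_iUnion₂, ← Finset.mem_range_succ_iff, iSup_subtype']
    apply Submodule.fg_iSup
    rintro ⟨i, hi⟩
    obtain ⟨s, hs⟩ := hF' i
    have : Submodule.span (reesAlgebra I) (s.image (lsingle R i) : Set (PolynomialModule R M)) =
        Submodule.span _ (single R i '' (F.N i : Set M)) := by
      rw [Finset.coe_image, ← Submodule.span_span_of_tower R, ← Submodule.map_span, hs]; rfl
    rw [Subtype.coe_mk, ← this]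
    exact ⟨_, rfl⟩

variable {F F'}

theorem Stable.of_le [IsNoetherianRing R] [Module.Finite R M] (hF : F.Stable)
    (hf : ∀ i, F'.N i ≤ F.N i) : F'.Stable := by
  rw [← submodule_fg_iff_stable] at hF ⊢
  any_goals intro i; exact IsNoetherian.noetherian _
  have := isNoetherian_of_fg_of_noetherian _ hF
  rw [isNoetherian_submodule] at this
  exact this _ (fun f hf' i => hf i (hf' i))

end Filtration

/-- The stable `I`-adic filtration on `⊤`. -/
def adicFiltration (I : Ideal R) : Filtration I M where
  N i := I ^ i • ⊤
  mono i := by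
    rw [add_comm, pow_add, mul_smul, pow_one]
    exact Submodule.smul_le_right
  smul_le i := by rw [add_comm, pow_add, mul_smul, pow_one]

theorem adicFiltration_stable (I : Ideal R) : (adicFiltration I : Filtration I M).Stable := by
  refine ⟨0, fun n _ => ?_⟩
  show I • (I ^ n • ⊤ : Submodule R M) = I ^ (n + 1) • ⊤
  rw [add_comm, pow_add, mul_smul, pow_one]

/-- Any `I`-filtration bounded by the `I`-adic one is stable. -/
theorem stable_of_le_adic [IsNoetherianRing R] [Module.Finite R M] (F : Filtration I M)
    (h : ∀ i, F.N i ≤ I ^ i • ⊤) : ∃ n₀, ∀ n ≥ n₀, I • F.N n = F.N (n + 1) :=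
  Filtration.Stable.of_le (adicFiltration_stable I) h

end ARG

section Helpers

variable {R : Type*} {M : Type*} [CommRing R] [AddCommGroup M] [Module R M]

theorem pi_mem_smul_top {ι : Type*} [Fintype ι] [DecidableEq ι] (J : Ideal R) (f : ι → M)
    (h : ∀ i, f i ∈ (J • ⊤ : Submodule R M)) : f ∈ (J • ⊤ : Submodule R (ι → M)) := by
  rw [← Finset.univ_sum_single f]
  refine Submodule.sum_mem _ fun i _ => ?_
  refine Submodule.smul_induction_on (h i) (fun r hr m _ => ?_) (fun x y hx hy => ?_)
  · rw [Pi.single_smul]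
    exact Submodule.smul_mem_smul hr trivial
  · rw [Pi.single_add]
    exact Submodule.add_mem _ hx hy

theorem smul_top_le_pow_smul_top {n m : ℕ} (J : Ideal R) (h : m ≤ n) :
    (J ^ n • ⊤ : Submodule R M) ≤ J ^ m • ⊤ :=
  Submodule.smul_mono (Ideal.pow_le_pow_right h) le_rfl

end Helpers

/-- Setup: `R` is a commutative Noetherian ℕ-graded ring (encoded as a
ℤ-graded ring with vanishing negative components), `M` a finitely generated ℤ-graded
`R`-module, `I` a homogeneous ideal and `N` a graded submodule of `M`.  Assume
`(0 :_M I) = 0` and let `u` be a homogeneous ideal with `I ⊆ u`.  Then there is `n₀` so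
that for all `n ≥ n₀` one has `(I^(n+1) N :_M u) ⊆ I^n M`; consequently
`(I^(n+1) N :_M u) = (I^(n+1) N :_{I^n M} u)`, i.e. the annihilator of `u` in
`M / I^(n+1) N` coincides with the annihilator of `u` in `I^n M / I^(n+1) N`. -/
theorem colon_eventually_inside_InM
    {R M : Type*} [CommRing R] [IsNoetherianRing R]
    [AddCommGroup M] [Module R M] [Module.Finite R M]
    (𝒜 : ℤ → AddSubgroup R) (ℳ : ℤ → AddSubgroup M)
    [GradedRing 𝒜] [DirectSum.Decomposition ℳ]
    (hsmul : ∀ (i j : ℤ), ∀ r ∈ 𝒜 i, ∀ x ∈ ℳ j, r • x ∈ ℳ (i + j))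
    (hA : ∀ i : ℤ, i < 0 → 𝒜 i = ⊥)
    (I : Ideal R) (hI : Ideal.IsHomogeneous 𝒜 I)
    (N : Submodule R M) (hN : ∀ x ∈ N, ∀ i : ℤ, (DirectSum.decompose ℳ x i : M) ∈ N)
    (h0 : ∀ x : M, (∀ r ∈ I, r • x = 0) → x = 0)
    (u : Ideal R) (hu : Ideal.IsHomogeneous 𝒜 u) (hIu : I ≤ u) :
    ∃ n₀ : ℕ, ∀ n ≥ n₀,
      (∀ x : M, (∀ r ∈ u, r • x ∈ (I ^ (n + 1) • N : Submodule R M)) →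
        x ∈ (I ^ n • ⊤ : Submodule R M)) ∧
      {x : M | ∀ r ∈ u, r • x ∈ (I ^ (n + 1) • N : Submodule R M)}
        = {x : M | x ∈ (I ^ n • ⊤ : Submodule R M) ∧
            ∀ r ∈ u, r • x ∈ (I ^ (n + 1) • N : Submodule R M)} := by
  classical
  -- a finite generating set of `I`
  obtain ⟨T, hT⟩ : I.FG := IsNoetherian.noetherian I
  have hTI : ∀ t : R, t ∈ T → t ∈ I := fun t ht => hT ▸ Submodule.subset_span ht
  -- the map `x ↦ (t • x)_{t ∈ T}`
  let φ : M →ₗ[R] (↥T → M) :=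
    LinearMap.pi fun t : ↥T => (t : R) • LinearMap.id
  have hφapp : ∀ (x : M) (t : ↥T), φ x t = (t : R) • x := fun x t => rfl
  have hφinj : Function.Injective φ := by
    intro x y hxy
    have hsub : ∀ r ∈ I, r • (x - y) = 0 := by
      intro r hr
      rw [← hT] at hr
      induction hr using Submodule.span_induction with
      | mem t ht =>
          have := congrFun hxy ⟨t, ht⟩
          rw [hφapp, hφapp] at this
          rw [smul_sub, this, sub_self]
      | zero => rw [zero_smul]
      | add a b _ _ ha hb => rw [add_smul, ha, hb, add_zero]
      | smul c a _ ha => rw [smul_eq_mul, mul_smul, ha, smul_zero]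
    have := h0 _ hsub
    exact sub_eq_zero.mp this
  -- Artin-Rees style filtration on `T → M` for the "start"
  let FAR : ARG.Filtration I (↥T → M) :=
    { N := fun n => (I ^ n • ⊤) ⊓ LinearMap.range φ
      mono := fun i => inf_le_inf (smul_top_le_pow_smul_top I (Nat.le_succ i)) le_rfl
      smul_le := fun i => Submodule.smul_le.2 fun r hr x hx => by
        refine ⟨?_, ?_⟩
        · have : r • x ∈ I • (I ^ i • ⊤ : Submodule R (↥T → M)) :=
            Submodule.smul_mem_smul hr hx.1
          rwa [← mul_smul, ← pow_succ'] at this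
        · obtain ⟨y, hy⟩ := hx.2
          exact ⟨r • y, by rw [_root_.map_smul, hy]⟩ }
  obtain ⟨k, hk⟩ := ARG.stable_of_le_adic FAR fun i => inf_le_left
  -- iterating stability: `FAR.N (k + d) ≤ I ^ d • range φ`
  have hFAR : ∀ d : ℕ, FAR.N (k + d) ≤ I ^ d • LinearMap.range φ := by
    intro d
    induction d with
    | zero => rw [pow_zero, one_smul]; exact inf_le_right
    | succ d ih =>
        have h1 : I • FAR.N (k + d) = FAR.N (k + d + 1) := hk (k + d) (Nat.le_add_right _ _)
        rw [show k + (d + 1) = k + d + 1 by omega, ← h1, pow_succ', mul_smul]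
        exact smul_mono_right _ ih
  -- the "climb" filtration
  let G : ARG.Filtration I M :=
    { N := fun m => (⨅ r : u, (I ^ (m + 2) • N).comap ((r : R) • (LinearMap.id : M →ₗ[R] M)))
          ⊓ (I ^ m • ⊤)
      mono := fun i => by
        refine inf_le_inf ?_ (smul_top_le_pow_smul_top I (Nat.le_succ i))
        exact le_iInf fun r => (iInf_le _ r).trans
          (Submodule.comap_mono (Submodule.smul_mono (Ideal.pow_le_pow_right (by omega)) le_rfl))
      smul_le := fun i => Submodule.smul_le.2 fun r hr x hx => by
        obtain ⟨hx1, hx2⟩ := hx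
        refine ⟨?_, ?_⟩
        · have hcol : ∀ s : u, (s : R) • x ∈ (I ^ (i + 2) • N : Submodule R M) :=
            fun s => Submodule.mem_comap.mp ((Submodule.mem_iInf _).mp hx1 s)
          refine (Submodule.mem_iInf _).mpr fun s => Submodule.mem_comap.mpr ?_
          have h2 : r • ((s : R) • x) ∈ I • (I ^ (i + 2) • N : Submodule R M) :=
            Submodule.smul_mem_smul hr (hcol s)
          rw [← mul_smul, ← pow_succ'] at h2
          show (s : R) • (r • x) ∈ _
          rwa [smul_comm]
        · have : r • x ∈ I • (I ^ i • ⊤ : Submodule R M) := Submodule.smul_mem_smul hr hx2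
          rwa [← mul_smul, ← pow_succ'] at this }
  obtain ⟨m₂, hm₂⟩ := ARG.stable_of_le_adic G fun i => inf_le_right
  -- key consequence of stability: eventually `G.N (m+1) ≤ I^(m+2) • N`
  have hGle : ∀ m, m₂ ≤ m → G.N (m + 1) ≤ (I ^ (m + 2) • N : Submodule R M) := by
    intro m hm
    rw [← hm₂ m hm]
    refine Submodule.smul_le.2 fun r hr x hx => ?_
    have hcol : (r : R) • x ∈ (I ^ (m + 2) • N : Submodule R M) :=
      Submodule.mem_comap.mp ((Submodule.mem_iInf _).mp hx.1 ⟨r, hIu hr⟩)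
    exact hcol
  refine ⟨k + m₂ + 1, fun n hn => ?_⟩
  have main : ∀ x : M, (∀ r ∈ u, r • x ∈ (I ^ (n + 1) • N : Submodule R M)) →
      x ∈ (I ^ n • ⊤ : Submodule R M) := by
    intro x hx
    set s := n + 1 - k with hs_def
    have hks : k + s = n + 1 := by omega
    have hs2 : m₂ + 2 ≤ s := by omega
    -- start : `x ∈ I ^ s • ⊤`
    have hmemFAR : φ x ∈ FAR.N (n + 1) := by
      refine ⟨pi_mem_smul_top _ _ fun t => ?_, ⟨x, rfl⟩⟩
      have h1 := hx (t : R) (hIu (hTI _ t.2))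
      have hle : (I ^ (n + 1) • N : Submodule R M) ≤ I ^ (n + 1) • ⊤ :=
        smul_mono_right _ le_top
      exact hle h1
    have hstart : x ∈ (I ^ s • ⊤ : Submodule R M) := by
      rw [← hks] at hmemFAR
      have h2 := hFAR s hmemFAR
      rw [← Submodule.map_top, ← Submodule.map_smul''] at h2
      obtain ⟨y, hy, hyx⟩ := h2
      rwa [← hφinj hyx]
    -- climb
    have climb : ∀ d : ℕ, x ∈ (I ^ (min n (s + d)) • ⊤ : Submodule R M) := by
      intro d
      induction d with
      | zero => exact smul_top_le_pow_smul_top I (min_le_right n s) hstart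
      | succ d ih =>
          by_cases hd : n ≤ s + d
          · rw [min_eq_left (by omega)] at ih ⊢
            exact ih
          · push_neg at hd
            rw [min_eq_right (by omega)] at ih
            have hxG : x ∈ G.N (s + d) := by
              refine ⟨(Submodule.mem_iInf _).mpr fun r => Submodule.mem_comap.mpr ?_, ih⟩
              have := hx (r : R) r.2
              exact Submodule.smul_mono (Ideal.pow_le_pow_right (by omega)) le_rfl this
            obtain ⟨m, hm⟩ : ∃ m, s + d = m + 1 := ⟨s + d - 1, by omega⟩
            have hmm : m₂ ≤ m := by omega
            have hx2 : x ∈ (I ^ (m + 2) • N : Submodule R M) := hGle m hmm (hm ▸ hxG)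
            have hx3 : x ∈ (I ^ (s + d + 1) • ⊤ : Submodule R M) := by
              have : s + d + 1 = m + 2 := by omega
              rw [this]
              have hle : (I ^ (m + 2) • N : Submodule R M) ≤ I ^ (m + 2) • ⊤ :=
                smul_mono_right _ le_top
              exact hle hx2
            exact smul_top_le_pow_smul_top I (by omega : min n (s + d + 1) ≤ s + d + 1) hx3
    have := climb n
    rwa [min_eq_left (by omega)] at this
  exact ⟨main, Set.ext fun y => ⟨fun hy => ⟨main y hy, hy⟩, fun hy => hy.2⟩⟩
end

section
/- Assume (0 :_M I) = 0. Let p be a prime ideal of R with I ⊆ p and p ∈ Ass_R(M / I^n N) for all sufficiently large n. Then there exist a ∈ {d_1, …, d_c} and b ∈ ℤ such that v_p(M / I^n N) = a·n + b for all sufficiently large n. -/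
section Dec
variable {ι : Type*} [DecidableEq ι] {G : Type*} [AddCommGroup G]
  (𝒢 : ι → AddSubgroup G) [DirectSum.Decomposition 𝒢]

/-- component of an element -/
noncomputable def dcomp (u : ι) (x : G) : G := (DirectSum.decompose 𝒢 x u : G)

lemma dcomp_add (u : ι) (x x' : G) : dcomp 𝒢 u (x + x') = dcomp 𝒢 u x + dcomp 𝒢 u x' := by
  simp [dcomp]

lemma dcomp_zero (u : ι) : dcomp 𝒢 u (0 : G) = 0 := by simp [dcomp]

lemma dcomp_mem (u : ι) (x : G) : dcomp 𝒢 u x ∈ 𝒢 u := (DirectSum.decompose 𝒢 x u).2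

lemma dcomp_of_mem_same {u : ι} {x : G} (h : x ∈ 𝒢 u) : dcomp 𝒢 u x = x :=
  DirectSum.decompose_of_mem_same 𝒢 h

lemma dcomp_of_mem_ne {u v : ι} {x : G} (h : x ∈ 𝒢 v) (huv : v ≠ u) : dcomp 𝒢 u x = 0 :=
  DirectSum.decompose_of_mem_ne 𝒢 h huv

lemma dcomp_sum {κ : Type*} (s : Finset κ) (f : κ → G) (u : ι) :
    dcomp 𝒢 u (∑ k ∈ s, f k) = ∑ k ∈ s, dcomp 𝒢 u (f k) := by
  classical
  induction s using Finset.induction with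
  | empty => simp [dcomp]
  | insert _ _ h ih => rw [Finset.sum_insert h, Finset.sum_insert h, dcomp_add, ih]

/-- key filter lemma -/
lemma dcomp_sum_filter {κ : Type*} [DecidableEq κ] (s : Finset κ) (f : κ → G) (g : κ → ι)
    (hf : ∀ k ∈ s, f k ∈ 𝒢 (g k)) (u : ι) :
    dcomp 𝒢 u (∑ k ∈ s, f k) = ∑ k ∈ s.filter (fun k => g k = u), f k := by
  rw [dcomp_sum, Finset.sum_filter]
  refine Finset.sum_congr rfl (fun k hk => ?_)
  by_cases h : g k = u
  · rw [if_pos h, ← h, dcomp_of_mem_same 𝒢 (hf k hk)]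
  · rw [if_neg h, dcomp_of_mem_ne 𝒢 (hf k hk) h]

/-- support of decomposition -/
noncomputable def dsupp (x : G) : Finset ι := by
  classical exact (DirectSum.decompose 𝒢 x).support

lemma dsupp_spec (x : G) (u : ι) : u ∈ dsupp 𝒢 x ↔ dcomp 𝒢 u x ≠ 0 := by
  classical
  rw [dsupp, DFinsupp.mem_support_iff]
  constructor
  · intro h hc; exact h (Subtype.ext hc)
  · intro h hc; exact h (by rw [dcomp, hc]; rfl)

lemma sum_dsupp_dcomp (x : G) : ∑ u ∈ dsupp 𝒢 x, dcomp 𝒢 u x = x := by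
  classical
  letI : ∀ (i : ι) (x : 𝒢 i), Decidable (x ≠ 0) := fun _ _ => Classical.dec _
  have h2 : (dsupp 𝒢 x : Finset ι) = (DirectSum.decompose 𝒢 x).support := by
    rw [dsupp]; congr!
  rw [h2]
  exact DirectSum.sum_support_decompose 𝒢 x

lemma dcomp_eq_zero_of_not_mem_dsupp {x : G} {u : ι} (h : u ∉ dsupp 𝒢 x) : dcomp 𝒢 u x = 0 := by
  by_contra hc; exact h ((dsupp_spec 𝒢 x u).2 hc)

lemma eq_zero_of_dsupp_empty {x : G} (h : dsupp 𝒢 x = ∅) : x = 0 := by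
  have := sum_dsupp_dcomp 𝒢 x
  rw [h, Finset.sum_empty] at this; exact this.symm

end Dec

section Graded
variable {R M : Type*} [CommRing R] [AddCommGroup M] [Module R M]
variable (𝒜 : ℤ → AddSubgroup R) (ℳ : ℤ → AddSubgroup M)
variable [GradedRing 𝒜] [DirectSum.Decomposition ℳ]

/-- graded submodule -/
def GrSub (P : Submodule R M) : Prop := ∀ x ∈ P, ∀ u : ℤ, dcomp ℳ u x ∈ P

variable (hsmul : ∀ (i j : ℤ), ∀ r ∈ 𝒜 i, ∀ x ∈ ℳ j, r • x ∈ ℳ (i + j))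

include hsmul in
lemma dcomp_smul_pairs (r : R) (x : M) (w : ℤ) :
    dcomp ℳ w (r • x) =
      ∑ q ∈ (dsupp 𝒜 r ×ˢ dsupp ℳ x).filter (fun q => q.1 + q.2 = w),
        dcomp 𝒜 q.1 r • dcomp ℳ q.2 x := by
  classical
  conv_lhs => rw [← sum_dsupp_dcomp 𝒜 r, ← sum_dsupp_dcomp ℳ x]
  rw [Finset.sum_smul]
  simp_rw [Finset.smul_sum]
  rw [← Finset.sum_product']
  exact dcomp_sum_filter ℳ _ _ _
    (fun q _ => hsmul q.1 q.2 _ (dcomp_mem 𝒜 q.1 r) _ (dcomp_mem ℳ q.2 x)) w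

include hsmul in
lemma GrSub.smul {K : Ideal R} (hK : K.IsHomogeneous 𝒜) {P : Submodule R M}
    (hP : GrSub ℳ P) : GrSub ℳ (K • P) := by
  intro z hz w
  refine Submodule.smul_induction_on hz ?_ ?_
  · intro r hr x hx
    rw [dcomp_smul_pairs 𝒜 ℳ hsmul]
    refine Submodule.sum_mem _ (fun q hq => ?_)
    exact Submodule.smul_mem_smul (hK q.1 hr) (hP x hx q.2)
  · intro z₁ z₂ h1 h2
    rw [dcomp_add]; exact Submodule.add_mem _ h1 h2

include hsmul in
lemma GrSub.powSmul {I : Ideal R} (hI : I.IsHomogeneous 𝒜) {N : Submodule R M}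
    (hN : GrSub ℳ N) (n : ℕ) : GrSub ℳ ((I ^ n • N : Submodule R M)) := by
  induction n with
  | zero => rw [pow_zero, Ideal.one_eq_top, Submodule.top_smul]; exact hN
  | succ n ih =>
      have : I ^ (n + 1) • N = I • (I ^ n • N : Submodule R M) := by
        rw [pow_succ, mul_comm, ← Ideal.smul_eq_mul, Submodule.smul_assoc]
      rw [this]
      exact GrSub.smul 𝒜 ℳ hsmul hI ih

include hsmul in
lemma dcomp_smul_homog {r' : R} {e : ℤ} (hr' : r' ∈ 𝒜 e) (x : M) (u : ℤ) :
    dcomp ℳ (e + u) (r' • x) = r' • dcomp ℳ u x := by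
  classical
  conv_lhs => rw [← sum_dsupp_dcomp ℳ x, Finset.smul_sum]
  rw [dcomp_sum_filter ℳ _ _ (fun u' => e + u')
    (fun u' _ => hsmul e u' r' hr' _ (dcomp_mem ℳ u' x))]
  have hfil : (dsupp ℳ x).filter (fun u' => e + u' = e + u)
      = (dsupp ℳ x).filter (fun u' => u' = u) := by
    apply Finset.filter_congr; intro u' _; constructor <;> (intro h; omega)
  rw [hfil, Finset.filter_eq']
  by_cases hu : u ∈ dsupp ℳ x
  · rw [if_pos hu, Finset.sum_singleton]
  · rw [if_neg hu, Finset.sum_empty, dcomp_eq_zero_of_not_mem_dsupp ℳ hu, smul_zero]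

include hsmul in
lemma dcomp_homog_smul {x : M} {u : ℤ} (hx : x ∈ ℳ u) (r : R) (e : ℤ) :
    dcomp ℳ (e + u) (r • x) = dcomp 𝒜 e r • x := by
  classical
  conv_lhs => rw [← sum_dsupp_dcomp 𝒜 r, Finset.sum_smul]
  rw [dcomp_sum_filter ℳ _ _ (fun e' => e' + u)
    (fun e' _ => hsmul e' u _ (dcomp_mem 𝒜 e' r) x hx)]
  have hfil : (dsupp 𝒜 r).filter (fun e' => e' + u = e + u)
      = (dsupp 𝒜 r).filter (fun e' => e' = e) := by
    apply Finset.filter_congr; intro e' _; constructor <;> (intro h; omega)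
  rw [hfil, Finset.filter_eq']
  by_cases he : e ∈ dsupp 𝒜 r
  · rw [if_pos he, Finset.sum_singleton]
  · rw [if_neg he, Finset.sum_empty, dcomp_eq_zero_of_not_mem_dsupp 𝒜 he, zero_smul]

include hsmul in
lemma kill_lemma {L : Submodule R M} (hL : GrSub ℳ L) (r : R) (b : ℤ)
    (hb : ∀ e ∈ dsupp 𝒜 r, e ≤ b) :
    ∀ s : ℕ, ∀ x' : M, (dsupp ℳ x').card ≤ s → r • x' ∈ L →
      (dcomp 𝒜 b r) ^ s • x' ∈ L := by
  classical
  intro s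
  induction s with
  | zero =>
      intro x' hcard _
      have : dsupp ℳ x' = ∅ := Finset.card_eq_zero.1 (Nat.le_zero.1 hcard)
      have hx0 : x' = 0 := eq_zero_of_dsupp_empty ℳ this
      rw [hx0, smul_zero]; exact Submodule.zero_mem _
  | succ s ih =>
      intro x' hcard hrx
      by_cases hx0 : x' = 0
      · rw [hx0, smul_zero]; exact Submodule.zero_mem _
      have hne : (dsupp ℳ x').Nonempty := by
        rcases Finset.eq_empty_or_nonempty (dsupp ℳ x') with h | h
        · exact absurd (eq_zero_of_dsupp_empty ℳ h) hx0
        · exact h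
      set v := (dsupp ℳ x').max' hne with hv
      set rb := dcomp 𝒜 b r with hrb
      -- step 1 : rb • (component v of x') ∈ L
      have step1 : rb • dcomp ℳ v x' ∈ L := by
        have hmem : dcomp ℳ (b + v) (r • x') ∈ L := hL _ hrx _
        rw [dcomp_smul_pairs 𝒜 ℳ hsmul] at hmem
        have hsub : (dsupp 𝒜 r ×ˢ dsupp ℳ x').filter (fun q => q.1 + q.2 = b + v)
            ⊆ {(b, v)} := by
          intro q hq
          rw [Finset.mem_filter, Finset.mem_product] at hq
          have h1 : q.1 ≤ b := hb q.1 hq.1.1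
          have h2 : q.2 ≤ v := (dsupp ℳ x').le_max' q.2 hq.1.2
          have h3 : q.1 + q.2 = b + v := hq.2
          have : q.1 = b ∧ q.2 = v := by omega
          simp [Finset.mem_singleton, Prod.ext_iff, this.1, this.2]
        rcases Finset.subset_singleton_iff.1 hsub with h | h
        · rw [h, Finset.sum_empty] at hmem
          by_cases hbmem : b ∈ dsupp 𝒜 r
          · exfalso
            have hvmem : v ∈ dsupp ℳ x' := (dsupp ℳ x').max'_mem hne
            have : ((b, v) : ℤ × ℤ) ∈
                (dsupp 𝒜 r ×ˢ dsupp ℳ x').filter (fun q => q.1 + q.2 = b + v) := by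
              rw [Finset.mem_filter, Finset.mem_product]; exact ⟨⟨hbmem, hvmem⟩, rfl⟩
            rw [h] at this; exact absurd this (Finset.notMem_empty _)
          · rw [hrb, dcomp_eq_zero_of_not_mem_dsupp 𝒜 hbmem, zero_smul]
            exact Submodule.zero_mem _
        · rw [h, Finset.sum_singleton] at hmem; exact hmem
      -- step 2
      set x'' := ∑ u ∈ (dsupp ℳ x').erase v, rb • dcomp ℳ u x' with hx''
      have factA : rb • x' = x'' + rb • dcomp ℳ v x' := by
        conv_lhs => rw [← sum_dsupp_dcomp ℳ x']
        rw [Finset.smul_sum, ← Finset.sum_erase_add _ _ ((dsupp ℳ x').max'_mem hne)]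
      have hxeq : x'' = rb • x' - rb • dcomp ℳ v x' := by
        rw [factA]; abel
      have factB : r • x'' ∈ L := by
        have heq : r • x'' = rb • (r • x') - r • (rb • dcomp ℳ v x') := by
          rw [hxeq, smul_sub, smul_comm rb r x']
        rw [heq]
        exact Submodule.sub_mem _ (Submodule.smul_mem _ _ hrx) (Submodule.smul_mem _ _ step1)
      have factC : (dsupp ℳ x'').card ≤ s := by
        have hsub : dsupp ℳ x'' ⊆ ((dsupp ℳ x').erase v).image (fun u => b + u) := by
          intro w hw
          by_contra hwim
          have hz : dcomp ℳ w x'' = 0 := by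
            rw [hx'', dcomp_sum]
            refine Finset.sum_eq_zero (fun u hu => ?_)
            refine dcomp_of_mem_ne ℳ
              (hsmul b u rb (dcomp_mem 𝒜 b r) _ (dcomp_mem ℳ u x')) ?_
            intro hbu
            exact hwim (Finset.mem_image.2 ⟨u, hu, hbu⟩)
          exact ((dsupp_spec ℳ x'' w).1 hw) hz
        calc (dsupp ℳ x'').card ≤ _ := Finset.card_le_card hsub
          _ ≤ ((dsupp ℳ x').erase v).card := Finset.card_image_le
          _ ≤ s := by
              rw [Finset.card_erase_of_mem ((dsupp ℳ x').max'_mem hne)]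
              omega
      have final : rb ^ (s + 1) • x' = rb ^ s • x'' + rb ^ s • (rb • dcomp ℳ v x') := by
        rw [pow_succ, mul_smul, factA, smul_add]
      rw [final]
      exact Submodule.add_mem _ (ih x'' factC factB) (Submodule.smul_mem _ _ step1)

include hsmul in
lemma p_homog {L : Submodule R M} (hL : GrSub ℳ L) {p : Ideal R} (hp : p.IsPrime)
    {x : M} (hx : ∀ r : R, r ∈ p ↔ r • x ∈ L) :
    ∀ r ∈ p, ∀ e : ℤ, dcomp 𝒜 e r ∈ p := by
  classical
  have hxne : x ≠ 0 := by
    intro h0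
    refine hp.ne_top (Ideal.eq_top_iff_one _ |>.2 ?_)
    rw [hx 1, h0, smul_zero]; exact Submodule.zero_mem _
  have hscard : 1 ≤ (dsupp ℳ x).card := by
    rcases Finset.eq_empty_or_nonempty (dsupp ℳ x) with h | h
    · exact absurd (eq_zero_of_dsupp_empty ℳ h) hxne
    · exact Finset.card_pos.2 h
  -- strong induction on the number of components of r
  suffices H : ∀ k : ℕ, ∀ r ∈ p, (dsupp 𝒜 r).card ≤ k → ∀ e : ℤ, dcomp 𝒜 e r ∈ p by
    intro r hr e; exact H _ r hr le_rfl e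
  intro k
  induction k with
  | zero =>
      intro r _ hcard e
      have : r = 0 := eq_zero_of_dsupp_empty 𝒜 (Finset.card_eq_zero.1 (Nat.le_zero.1 hcard))
      rw [this, dcomp_zero]; exact Submodule.zero_mem _
  | succ k ih =>
      intro r hr hcard e
      rcases Finset.eq_empty_or_nonempty (dsupp 𝒜 r) with hemp | hne
      · have : r = 0 := eq_zero_of_dsupp_empty 𝒜 hemp
        rw [this, dcomp_zero]; exact Submodule.zero_mem _
      set b := (dsupp 𝒜 r).max' hne with hb
      set rb := dcomp 𝒜 b r with hrb
      have hrbp : rb ∈ p := by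
        have hkill := kill_lemma 𝒜 ℳ hsmul hL r b
          (fun e he => (dsupp 𝒜 r).le_max' e he) (dsupp ℳ x).card x le_rfl ((hx r).1 hr)
        have : rb ^ (dsupp ℳ x).card ∈ p := (hx _).2 hkill
        exact (hp.pow_mem_iff_mem _ (by omega)).1 this
      have hr' : r - rb ∈ p := Submodule.sub_mem _ hr hrbp
      have hcomp : ∀ u : ℤ, dcomp 𝒜 u (r - rb) = if u = b then 0 else dcomp 𝒜 u r := by
        intro u
        have : dcomp 𝒜 u (r - rb) = dcomp 𝒜 u r - dcomp 𝒜 u rb := by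
          have := dcomp_add 𝒜 u (r - rb) rb
          rw [sub_add_cancel] at this
          rw [this]; abel
        rw [this]
        by_cases hub : u = b
        · rw [if_pos hub, hub, dcomp_of_mem_same 𝒜 (dcomp_mem 𝒜 b r)]; abel
        · rw [if_neg hub, dcomp_of_mem_ne 𝒜 (dcomp_mem 𝒜 b r) (Ne.symm hub), sub_zero]
      have hsupp' : dsupp 𝒜 (r - rb) ⊆ (dsupp 𝒜 r).erase b := by
        intro u hu
        have hne0 := (dsupp_spec 𝒜 _ u).1 hu
        rw [hcomp u] at hne0
        by_cases hub : u = b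
        · rw [if_pos hub] at hne0; exact absurd rfl hne0
        · rw [if_neg hub] at hne0
          exact Finset.mem_erase.2 ⟨hub, (dsupp_spec 𝒜 r u).2 hne0⟩
      have hcard' : (dsupp 𝒜 (r - rb)).card ≤ k := by
        calc (dsupp 𝒜 (r - rb)).card ≤ ((dsupp 𝒜 r).erase b).card := Finset.card_le_card hsupp'
          _ ≤ k := by rw [Finset.card_erase_of_mem ((dsupp 𝒜 r).max'_mem hne)]; omega
      have := ih (r - rb) hr' hcard'
      by_cases heb : e = b
      · rw [heb]; exact hrbp
      · have h2 := this e
        rw [hcomp e, if_neg heb] at h2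
        exact h2

end Graded

open Polynomial PolynomialModule

noncomputable def φR {R : Type*} [CommRing R] {c : ℕ} (y : Fin c → R) :
    MvPolynomial (Fin c) R →+* Polynomial R :=
  (MvPolynomial.aeval (fun j => Polynomial.C (y j) * Polynomial.X)).toRingHom

def HM (R M : Type*) [CommRing R] [AddCommGroup M] [Module R M]
    {c : ℕ} (_y : Fin c → R) : Type _ := PolynomialModule R M

section HMod
variable {R M : Type*} [CommRing R] [AddCommGroup M] [Module R M]
variable {c : ℕ} (y : Fin c → R)

noncomputable instance : AddCommGroup (HM R M y) :=
  inferInstanceAs (AddCommGroup (PolynomialModule R M))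

noncomputable instance : Module (Polynomial R) (HM R M y) :=
  inferInstanceAs (Module (Polynomial R) (PolynomialModule R M))

noncomputable instance : Module (MvPolynomial (Fin c) R) (HM R M y) :=
  Module.compHom (PolynomialModule R M) (φR y)

instance : FunLike (HM R M y) ℕ M where
  coe f := (show PolynomialModule R M from f).coeff
  coe_injective _ _ h := PolynomialModule.coeff_injective (DFunLike.coe_injective h)

noncomputable def sing (n : ℕ) (x : M) : HM R M y := PolynomialModule.single R n x

lemma smul_def' (a : MvPolynomial (Fin c) R) (f : HM R M y) :
    a • f = (φR y a) • f := rfl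

lemma HM.add_apply (f g : HM R M y) (n : ℕ) : (f + g) n = f n + g n :=
  rfl

lemma HM.zero_apply (n : ℕ) : (0 : HM R M y) n = 0 := rfl

lemma HM.smul_apply' (a : MvPolynomial (Fin c) R) (f : HM R M y) (n : ℕ) :
    (a • f) n = ∑ x ∈ Finset.HasAntidiagonal.antidiagonal n, (φR y a).coeff x.1 • f x.2 := by
  rw [smul_def']; exact PolynomialModule.smul_apply _ _ _

lemma sing_apply (n : ℕ) (x : M) (k : ℕ) : sing y n x k = if n = k then x else 0 :=
  Finsupp.single_apply

lemma sing_zero (n : ℕ) : sing y n (0 : M) = 0 :=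
  PolynomialModule.single_zero n

lemma sing_add' (n : ℕ) (x x' : M) : sing y n (x + x') = sing y n x + sing y n x' :=
  PolynomialModule.single_add n x x'

lemma mono_smul_sing (m : Fin c →₀ ℕ) (r : R) (n : ℕ) (x : M) :
    (MvPolynomial.monomial m r) • sing y n x
      = sing y ((m.sum fun _ e => e) + n) ((r * m.prod fun j e => y j ^ e) • x) := by
  rw [smul_def']
  show (φR y _) • (PolynomialModule.single R n x) = PolynomialModule.single R _ _
  have hφ : φR y (MvPolynomial.monomial m r)
      = Polynomial.monomial (m.sum fun _ e => e) (r * m.prod fun j e => y j ^ e) := by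
    rw [φR]
    simp only [AlgHom.toRingHom_eq_coe, RingHom.coe_coe, MvPolynomial.aeval_monomial]
    have : ∀ (s : Finset (Fin c)) (g : Fin c → ℕ), (∏ j ∈ s, (Polynomial.C (y j) * Polynomial.X) ^ g j)
        = Polynomial.C (∏ j ∈ s, y j ^ g j) * Polynomial.X ^ (∑ j ∈ s, g j) := by
      intro s g
      rw [Finset.prod_congr rfl (fun j _ => by rw [mul_pow, ← Polynomial.C_pow]),
        Finset.prod_mul_distrib, ← map_prod, Finset.prod_pow_eq_pow_sum]
    rw [Finsupp.prod, this m.support m, Polynomial.algebraMap_eq, ← mul_assoc,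
      ← Polynomial.C_mul, Polynomial.C_mul_X_pow_eq_monomial]
    rfl
  rw [hφ, PolynomialModule.monomial_smul_single]
end HMod

section Fam
variable {R M : Type*} [CommRing R] [AddCommGroup M] [Module R M]
variable {c : ℕ} (y : Fin c → R)

lemma C_smul_sing (r : R) (n : ℕ) (x : M) :
    (MvPolynomial.C r : MvPolynomial (Fin c) R) • sing y n x = sing y n (r • x) := by
  rw [MvPolynomial.C_apply, mono_smul_sing]
  congr 1
  · rw [Finsupp.sum_zero_index, zero_add]
  · rw [Finsupp.prod_zero_index, mul_one]

lemma X_smul_sing (j : Fin c) (n : ℕ) (x : M) :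
    (MvPolynomial.X j : MvPolynomial (Fin c) R) • sing y n x = sing y (1 + n) (y j • x) := by
  have : (MvPolynomial.X j : MvPolynomial (Fin c) R) = MvPolynomial.monomial (Finsupp.single j 1) 1 := rfl
  rw [this, mono_smul_sing]
  congr 1
  · rw [Finsupp.sum_single_index]; rfl
  · rw [Finsupp.prod_single_index (by simp), pow_one, one_mul]

/-- coefficients of the image polynomial lie in powers of J -/
lemma φR_coeff_mem (a : MvPolynomial (Fin c) R) (k : ℕ) :
    (φR y a).coeff k ∈ (Ideal.span (Set.range y)) ^ k := by
  induction a using MvPolynomial.induction_on generalizing k with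
  | C r =>
      have : φR y (MvPolynomial.C r) = Polynomial.C r := by
        rw [φR]; simp
      rw [this]
      cases k with
      | zero => simp
      | succ k => simp [Polynomial.coeff_C]
  | add p q hp hq =>
      rw [map_add, Polynomial.coeff_add]
      exact Ideal.add_mem _ (hp k) (hq k)
  | mul_X p j hp =>
      have : φR y (p * MvPolynomial.X j) = φR y p * Polynomial.C (y j) * Polynomial.X := by
        rw [map_mul]
        have : φR y (MvPolynomial.X j) = Polynomial.C (y j) * Polynomial.X := by
          rw [φR]; simp
        rw [this, mul_assoc]
      rw [this]
      cases k with
      | zero => rw [Polynomial.coeff_mul_X_zero]; exact Ideal.zero_mem _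
      | succ k =>
          rw [Polynomial.coeff_mul_X, Polynomial.coeff_mul_C, pow_succ]
          exact Ideal.mul_mem_mul (hp k) (Ideal.subset_span ⟨j, rfl⟩)

/-- powers of J move a compatible family up -/
lemma famJpow (C : ℕ → Submodule R M)
    (hC : ∀ (j : Fin c) (n : ℕ), ∀ x ∈ C n, y j • x ∈ C (n + 1)) :
    ∀ (k : ℕ) (r : R), r ∈ (Ideal.span (Set.range y)) ^ k →
      ∀ (n : ℕ), ∀ x ∈ C n, r • x ∈ C (n + k) := by
  have h1 : ∀ r ∈ Ideal.span (Set.range y), ∀ (n : ℕ), ∀ x ∈ C n, r • x ∈ C (n + 1) := by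
    intro r hr
    refine Submodule.span_induction ?_ ?_ ?_ ?_ hr
    · rintro r ⟨j, rfl⟩; exact hC j
    · intro n x _; rw [zero_smul]; exact Submodule.zero_mem _
    · intro r r' _ _ h h' n x hx; rw [add_smul]; exact Submodule.add_mem _ (h n x hx) (h' n x hx)
    · intro a r _ h n x hx
      rw [smul_eq_mul, mul_smul]
      exact Submodule.smul_mem _ _ (h n x hx)
  intro k
  induction k with
  | zero => intro r _ n x hx; exact Submodule.smul_mem _ _ hx
  | succ k ih =>
      intro r hr n x hx
      rw [pow_succ] at hr
      refine Submodule.mul_induction_on hr ?_ ?_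
      · intro a ha b hb
        rw [mul_smul]
        have := h1 b hb n x hx
        have h2 := ih a ha (n + 1) _ this
        have : n + 1 + k = n + (k + 1) := by omega
        rwa [this] at h2
      · intro r r' h h'
        rw [add_smul]; exact Submodule.add_mem _ h h'

/-- the submodule of `HM` givenby a compatible family of submodules -/
noncomputable def famSub (C : ℕ → Submodule R M)
    (hC : ∀ (j : Fin c) (n : ℕ), ∀ x ∈ C n, y j • x ∈ C (n + 1)) :
    Submodule (MvPolynomial (Fin c) R) (HM R M y) where
  carrier := {f | ∀ n, f n ∈ C n}
  add_mem' := by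
    intro f g hf hg n
    rw [HM.add_apply]; exact Submodule.add_mem _ (hf n) (hg n)
  zero_mem' := by intro n; rw [HM.zero_apply]; exact Submodule.zero_mem _
  smul_mem' := by
    intro a f hf n
    rw [HM.smul_apply']
    refine Submodule.sum_mem _ (fun q hq => ?_)
    have hk : q.1 + q.2 = n := Finset.HasAntidiagonal.mem_antidiagonal.1 hq
    have h2 := famJpow y C hC q.1 _ (φR_coeff_mem y a q.1) q.2 _ (hf q.2)
    have : q.2 + q.1 = n := by omega
    rwa [this] at h2

lemma mem_famSub_iff (C : ℕ → Submodule R M) (hC) (f : HM R M y) :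
    f ∈ famSub y C hC ↔ ∀ n, f n ∈ C n := Iff.rfl

lemma sing_mem_famSub_iff (C : ℕ → Submodule R M) (hC) (n : ℕ) (x : M) :
    sing y n x ∈ famSub y C hC ↔ x ∈ C n := by
  rw [mem_famSub_iff]
  constructor
  · intro h
    have := h n
    rw [sing_apply, if_pos rfl] at this; exact this
  · intro hx k
    rw [sing_apply]
    by_cases hnk : n = k
    · rw [if_pos hnk, ← hnk]; exact hx
    · rw [if_neg hnk]; exact Submodule.zero_mem _

end Fam

section Noeth
variable {R M : Type*} [CommRing R] [AddCommGroup M] [Module R M]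
variable {c : ℕ} (y : Fin c → R)

/-- reduction gives `I^(n+1) = J * I^n` for `n ≥ m0` -/
lemma red_step (I : Ideal R) (m0 : ℕ)
    (hred : Ideal.span (Set.range y) * I ^ m0 = I ^ (m0 + 1)) :
    ∀ k : ℕ, Ideal.span (Set.range y) * I ^ (m0 + k) = I ^ (m0 + k + 1) := by
  intro k
  induction k with
  | zero => simpa using hred
  | succ k ih =>
      have e : m0 + (k + 1) = m0 + k + 1 := by omega
      rw [e, pow_succ, ← mul_assoc, ih, ← pow_succ]

lemma noeth_famN [IsNoetherianRing R] [Module.Finite R M]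
    (I : Ideal R) (N : Submodule R M) (m0 : ℕ)
    (hred : Ideal.span (Set.range y) * I ^ m0 = I ^ (m0 + 1))
    (p : Ideal R) (hIp : I ≤ p)
    (h0 : ∀ x : M, (∀ r ∈ I, r • x = 0) → x = 0)
    (C : ℕ → Submodule R M)
    (hC : ∀ (j : Fin c) (n : ℕ), ∀ x ∈ C n, y j • x ∈ C (n + 1))
    (hCp : ∀ (n : ℕ), ∀ x ∈ C n, ∀ r ∈ p, r • x ∈ (I ^ n • N : Submodule R M)) :
    IsNoetherian (MvPolynomial (Fin c) R) ↥(famSub y C hC) := by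
  classical
  set A := MvPolynomial (Fin c) R with hA
  set J := Ideal.span (Set.range y) with hJ
  set L : ℕ → Submodule R M := fun n => (I ^ n • N : Submodule R M) with hLdef
  -- finite generating sets for each L n
  choose sgen hsgen using fun n => (IsNoetherian.noetherian (L n) :
    ∃ S : Finset M, Submodule.span R (S : Set M) = L n)
  set GS : Set (HM R M y) := ⋃ (n : ℕ) (_ : n ≤ m0), (sing y n '' (sgen n : Set M)) with hGS
  have hGSfin : GS.Finite := by
    refine Set.Finite.biUnion (Set.finite_Iic m0) ?_
    intro n _
    exact (Finset.finite_toSet (sgen n)).image _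
  set ℒ : Submodule A (HM R M y) := Submodule.span A GS with hℒ
  -- P1 : all sing y n x with x ∈ L n are in ℒ
  have P1 : ∀ (n : ℕ), ∀ x ∈ L n, sing y n x ∈ ℒ := by
    have claim0 : ∀ n ≤ m0, ∀ x ∈ L n, sing y n x ∈ ℒ := by
      intro n hn x hx
      rw [← hsgen n] at hx
      refine Submodule.span_induction ?_ ?_ ?_ ?_ hx
      · intro z hz
        refine Submodule.subset_span ?_
        exact Set.mem_biUnion hn (Set.mem_image_of_mem _ hz)
      · rw [sing_zero]
        exact Submodule.zero_mem _
      · intro z w _ _ h1 h2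
        rw [sing_add']
        exact Submodule.add_mem _ h1 h2
      · intro r z _ h1
        rw [← C_smul_sing]
        exact Submodule.smul_mem _ _ h1
    intro n
    induction n using Nat.strong_induction_on with
    | _ n ih =>
        by_cases hn : n ≤ m0
        · exact claim0 n hn
        · -- n = m + 1 with m ≥ m0
          obtain ⟨m, rfl⟩ : ∃ m, n = m + 1 := ⟨n - 1, by omega⟩
          have hm : m0 ≤ m := by omega
          obtain ⟨k, rfl⟩ : ∃ k, m = m0 + k := ⟨m - m0, by omega⟩
          have hLs : L (m0 + k + 1) = J • L (m0 + k) := by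
            rw [hLdef]
            show (I ^ (m0 + k + 1) • N : Submodule R M) = _
            rw [← red_step y I m0 hred k, ← Ideal.smul_eq_mul, Submodule.smul_assoc]
          intro x hx
          rw [hLs] at hx
          refine Submodule.smul_induction_on hx ?_ ?_
          · intro r hr z hz
            have hz' : sing y (m0 + k) z ∈ ℒ := ih (m0 + k) (by omega) z hz
            -- induction over r ∈ J
            refine Submodule.span_induction ?_ ?_ ?_ ?_ hr
            · rintro r' ⟨j, rfl⟩
              have e : m0 + k + 1 = 1 + (m0 + k) := by omega
              rw [e, ← X_smul_sing]
              exact Submodule.smul_mem _ _ hz'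
            · rw [zero_smul, sing_zero]
              exact Submodule.zero_mem _
            · intro a b _ _ h1 h2
              rw [add_smul, sing_add']
              exact Submodule.add_mem _ h1 h2
            · intro a b _ h1
              rw [smul_eq_mul, mul_smul, ← C_smul_sing]
              exact Submodule.smul_mem _ _ h1
          · intro z w h1 h2
            rw [sing_add']
            exact Submodule.add_mem _ h1 h2
  -- P2 : coefficientwise membership implies membership in ℒ
  have P2 : ∀ g : ℕ →₀ M, (∀ k, g k ∈ L k) → (show HM R M y from PolynomialModule.ofCoeff R g) ∈ ℒ := by
    intro g
    induction g using Finsupp.induction with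
    | zero => intro _; exact Submodule.zero_mem _
    | single_add a b f haf hb ih =>
        intro hg
        have hfa : b ∈ L a := by
          have := hg a
          rw [Finsupp.add_apply, Finsupp.single_apply, if_pos rfl,
            Finsupp.notMem_support_iff.1 haf, add_zero] at this
          exact this
        have hf : ∀ k, f k ∈ L k := by
          intro k
          by_cases hk : k = a
          · rw [hk, Finsupp.notMem_support_iff.1 haf]; exact Submodule.zero_mem _
          · have := hg k
            rw [Finsupp.add_apply, Finsupp.single_apply, if_neg (fun h => hk h.symm),
              zero_add] at this
            exact this
        have : (show HM R M y from PolynomialModule.ofCoeff R (Finsupp.single a b + f))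
            = sing y a b + (show HM R M y from PolynomialModule.ofCoeff R f) := rfl
        rw [this]
        exact Submodule.add_mem _ (P1 a b hfa) (ih hf)
  -- generators of p
  obtain ⟨genp, hgenp⟩ : ∃ S : Finset R, Ideal.span (S : Set R) = p :=
    IsNoetherian.noetherian p
  -- the compHom lemma : C r • f computed coefficientwise
  have Cr_apply : ∀ (r : R) (f : HM R M y) (k : ℕ),
      ((MvPolynomial.C r : A) • f) k = r • f k := by
    intro r f k
    rw [HM.smul_apply']
    have hφC : φR y (MvPolynomial.C r : A) = Polynomial.C r := by rw [φR]; simp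
    rw [hφC]
    rw [Finset.sum_eq_single (0, k)]
    · rw [Polynomial.coeff_C_zero]
    · rintro ⟨u, v⟩ huv hne
      have : u + v = k := Finset.HasAntidiagonal.mem_antidiagonal.1 huv
      have hu : u ≠ 0 := by
        intro h
        have hv : v = k := by omega
        exact hne (by simp [Prod.ext_iff, h, hv])
      rw [Polynomial.coeff_C, if_neg hu, zero_smul]
    · intro h
      exact absurd (Finset.HasAntidiagonal.mem_antidiagonal.2 (by omega)) h
  -- the embedding
  haveI : IsNoetherian A ↥ℒ :=
    isNoetherian_of_fg_of_noetherian ℒ (Submodule.fg_span hGSfin)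
  set P := famSub y C hC with hP
  have hin : ∀ (f : HM R M y), f ∈ P → ∀ r ∈ genp, (MvPolynomial.C r : A) • f ∈ ℒ := by
    intro f hf r hr
    have hp' : r ∈ p := by rw [← hgenp]; exact Ideal.subset_span hr
    refine P2 (PolynomialModule.coeff (show PolynomialModule R M from (MvPolynomial.C r : A) • f)) (fun k => ?_)
    show ((MvPolynomial.C r : A) • f) k ∈ L k
    have : ((MvPolynomial.C r : A) • f) k = r • f k := Cr_apply r f k
    rw [this]
    exact hCp k (f k) (hf k) r hp'
  set T := ({x // x ∈ genp} → ↥ℒ) with hT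
  haveI : IsNoetherian A T := inferInstance
  set Φ : ↥P →ₗ[A] T :=
    { toFun := fun f => fun r => ⟨(MvPolynomial.C (r : R) : A) • (f : HM R M y),
        hin f f.2 r r.2⟩
      map_add' := by
        intro f g; funext r; apply Subtype.ext
        show (MvPolynomial.C (r : R) : A) • ((f : HM R M y) + g) = _
        rw [smul_add]; rfl
      map_smul' := by
        intro a f; funext r; apply Subtype.ext
        show (MvPolynomial.C (r : R) : A) • (a • (f : HM R M y)) = a • _
        rw [smul_smul, mul_comm, ← smul_smul] } with hΦ
  have hinj : Function.Injective Φ := by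
    intro f g hfg
    have hsub : ∀ h : ↥P, Φ h = 0 → h = 0 := by
      intro h hh
      apply Subtype.ext
      have hcoef : ∀ k, (h : HM R M y) k = 0 := by
        intro k
        have hgen : ∀ r ∈ genp, r • (h : HM R M y) k = 0 := by
          intro r hr
          have := congrFun hh ⟨r, hr⟩
          have h2 : (MvPolynomial.C (r : R) : A) • (h : HM R M y) = 0 := by
            exact Subtype.ext_iff.1 this
          calc r • (h : HM R M y) k = ((MvPolynomial.C r : A) • (h : HM R M y)) k :=
                (Cr_apply r _ k).symm
            _ = 0 := by rw [h2]; rfl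
        have hallp : ∀ r ∈ p, r • (h : HM R M y) k = 0 := by
          intro r hrp
          rw [← hgenp] at hrp
          refine Submodule.span_induction ?_ ?_ ?_ ?_ hrp
          · intro z hz; exact hgen z hz
          · rw [zero_smul]
          · intro a b _ _ h1 h2; rw [add_smul, h1, h2, add_zero]
          · intro a b _ h1; rw [smul_eq_mul, mul_smul, h1, smul_zero]
        exact h0 _ (fun r hr => hallp r (hIp hr))
      exact PolynomialModule.ext (Finsupp.ext hcoef)
    have : Φ (f - g) = 0 := by rw [map_sub, hfg, sub_self]
    have := hsub _ this
    rwa [sub_eq_zero] at this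
  exact isNoetherian_of_injective Φ hinj


end Noeth

section Core
variable {R M : Type*} [CommRing R] [AddCommGroup M] [Module R M]
variable (𝒜 : ℤ → AddSubgroup R) (ℳ : ℤ → AddSubgroup M)
variable [GradedRing 𝒜] [DirectSum.Decomposition ℳ]
variable {c : ℕ} (y : Fin c → R) (d : Fin c → ℤ)

/-- total degree of an exponent -/
def tot (m : Fin c →₀ ℕ) : ℕ := m.sum fun _ e => e

/-- weighted degree of an exponent -/
def wt (m : Fin c →₀ ℕ) : ℤ := m.sum fun j e => (e : ℤ) * d j

/-- the monomial in the `y`'s -/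
def ym (m : Fin c →₀ ℕ) : R := m.prod fun j e => y j ^ e

variable (hy : ∀ j, y j ∈ 𝒜 (d j))

include hy in
lemma ym_mem (m : Fin c →₀ ℕ) : ym y m ∈ 𝒜 (wt d m) := by
  classical
  rw [ym, wt, Finsupp.prod, Finsupp.sum]
  induction m.support using Finset.induction with
  | empty => simpa using SetLike.one_mem_graded 𝒜
  | insert _ _ hj ih =>
      rename_i j s
      rw [Finset.prod_insert hj, Finset.sum_insert hj]
      refine SetLike.mul_mem_graded ?_ ih
      have h1 : y j ^ m j ∈ 𝒜 ((m j) • d j) := SetLike.pow_mem_graded (m j) (hy j)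
      have h2 : ((m j) • d j) = ((m j : ℤ) * d j) := nsmul_eq_mul _ _
      rwa [h2] at h1

lemma mono_smul_sing' (m : Fin c →₀ ℕ) (r : R) (n : ℕ) (x : M) :
    (MvPolynomial.monomial m r) • sing y n x = sing y (tot m + n) ((r * ym y m) • x) :=
  mono_smul_sing y m r n x

/-- the component extraction operator on `HM` -/
noncomputable def compH (n : ℕ) (u : ℤ) (f : HM R M y) : HM R M y :=
  sing y n (dcomp ℳ u (f n))

lemma compH_add (n : ℕ) (u : ℤ) (f g : HM R M y) :
    compH ℳ y n u (f + g) = compH ℳ y n u f + compH ℳ y n u g := by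
  rw [compH, compH, compH, HM.add_apply, dcomp_add, sing_add']

lemma compH_sing_same (n : ℕ) (u : ℤ) (x : M) (hx : x ∈ ℳ u) :
    compH ℳ y n u (sing y n x) = sing y n x := by
  rw [compH, sing_apply, if_pos rfl, dcomp_of_mem_same ℳ hx]

/-- graded submodules of `HM` -/
def grA (Q : Submodule (MvPolynomial (Fin c) R) (HM R M y)) : Prop :=
  ∀ f ∈ Q, ∀ (n : ℕ) (u : ℤ), compH ℳ y n u f ∈ Q

/-- generators of a fixed bidegree -/
def gens (k w : ℤ) : Set (MvPolynomial (Fin c) R) :=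
  {a | ∃ (m : Fin c →₀ ℕ) (r : R), ((tot m : ℕ) : ℤ) = k ∧ r ∈ 𝒜 (w - wt d m) ∧
    a = MvPolynomial.monomial m r}

variable (hsmul : ∀ (i j : ℤ), ∀ r ∈ 𝒜 i, ∀ x ∈ ℳ j, r • x ∈ ℳ (i + j))

include hsmul hy in
lemma key8 (n_z : ℕ) (u_z : ℤ) (x_z : M) (hxz : x_z ∈ ℳ u_z) (a : MvPolynomial (Fin c) R)
    (n : ℕ) (u : ℤ) :
    ∃ b ∈ AddSubmonoid.closure (gens 𝒜 d ((n : ℤ) - (n_z : ℤ)) (u - u_z)),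
      compH ℳ y n u (a • sing y n_z x_z) = b • sing y n_z x_z := by
  classical
  induction a using MvPolynomial.induction_on' with
  | add p q hp hq =>
      obtain ⟨b1, hb1, he1⟩ := hp
      obtain ⟨b2, hb2, he2⟩ := hq
      refine ⟨b1 + b2, AddSubmonoid.add_mem _ hb1 hb2, ?_⟩
      rw [add_smul, compH_add, he1, he2, add_smul]
  | monomial m r =>
      rw [mono_smul_sing']
      by_cases htot : tot m + n_z = n
      · set e₀ : ℤ := u - u_z - wt d m with he₀
        have hdc : dcomp ℳ u ((r * ym y m) • x_z) = (dcomp 𝒜 e₀ r * ym y m) • x_z := by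
          conv_lhs => rw [← sum_dsupp_dcomp 𝒜 r, Finset.sum_mul]
          have : (∑ e ∈ dsupp 𝒜 r, dcomp 𝒜 e r * ym y m) • x_z
              = ∑ e ∈ dsupp 𝒜 r, (dcomp 𝒜 e r * ym y m) • x_z := Finset.sum_smul
          rw [this, dcomp_sum_filter ℳ _ _ (fun e => e + wt d m + u_z)
            (fun e _ => by
              have h1 : dcomp 𝒜 e r * ym y m ∈ 𝒜 (e + wt d m) :=
                SetLike.mul_mem_graded (dcomp_mem 𝒜 e r) (ym_mem 𝒜 y d hy m)
              exact hsmul _ _ _ h1 _ hxz)]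
          have hfil : (dsupp 𝒜 r).filter (fun e => e + wt d m + u_z = u)
              = (dsupp 𝒜 r).filter (fun e => e = e₀) := by
            apply Finset.filter_congr; intro e _
            constructor <;> (intro h; omega)
          rw [hfil, Finset.filter_eq']
          by_cases he : e₀ ∈ dsupp 𝒜 r
          · rw [if_pos he, Finset.sum_singleton]
          · rw [if_neg he, Finset.sum_empty,
              dcomp_eq_zero_of_not_mem_dsupp 𝒜 he, zero_mul, zero_smul]
        refine ⟨MvPolynomial.monomial m (dcomp 𝒜 e₀ r), ?_, ?_⟩
        · refine AddSubmonoid.subset_closure ?_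
          exact ⟨m, dcomp 𝒜 e₀ r, by omega, by rw [he₀]; exact dcomp_mem 𝒜 e₀ r, rfl⟩
        · rw [htot, compH, sing_apply, if_pos rfl, hdc, mono_smul_sing', htot]
      · refine ⟨0, AddSubmonoid.zero_mem _, ?_⟩
        rw [compH, sing_apply, if_neg htot, dcomp_zero, sing_zero, zero_smul]

/-- annihilator of an element into a submodule -/
noncomputable def annH (Q : Submodule (MvPolynomial (Fin c) R) (HM R M y)) (z : HM R M y) :
    Ideal (MvPolynomial (Fin c) R) where
  carrier := {a | a • z ∈ Q}
  add_mem' := fun ha hb => by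
    rw [Set.mem_setOf_eq, add_smul]; exact Submodule.add_mem _ ha hb
  zero_mem' := by rw [Set.mem_setOf_eq, zero_smul]; exact Submodule.zero_mem _
  smul_mem' := fun a b hb => by
    rw [Set.mem_setOf_eq, smul_eq_mul, mul_smul]; exact Submodule.smul_mem _ _ hb

lemma mem_annH (Q : Submodule (MvPolynomial (Fin c) R) (HM R M y)) (z : HM R M y)
    (a : MvPolynomial (Fin c) R) : a ∈ annH y Q z ↔ a • z ∈ Q := Iff.rfl

/-- the support set: degrees of homogeneous elements in `P` but not `Q` at level `n` -/
def suppPQ (P Q : Submodule (MvPolynomial (Fin c) R) (HM R M y)) (n : ℕ) : Set ℤ :=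
  {u | ∃ x : M, x ∈ ℳ u ∧ sing y n x ∈ P ∧ sing y n x ∉ Q}

/-- eventual linearity (or emptiness) of the minimal degree -/
def GOOD (P Q : Submodule (MvPolynomial (Fin c) R) (HM R M y)) : Prop :=
  (∃ n₁ : ℕ, ∀ n ≥ n₁, suppPQ ℳ y P Q n = ∅) ∨
  (∃ (j : Fin c) (b : ℤ) (n₁ : ℕ), ∀ n ≥ n₁, IsLeast (suppPQ ℳ y P Q n) (d j * n + b))

include hsmul hy in
lemma extract (Q : Submodule (MvPolynomial (Fin c) R) (HM R M y)) (hQgr : grA ℳ y Q)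
    (n_z : ℕ) (u_z : ℤ) (x_z : M) (hxz : x_z ∈ ℳ u_z) (n : ℕ) (u : ℤ)
    (hu : u ∈ suppPQ ℳ y (Q ⊔ Submodule.span _ {sing y n_z x_z}) Q n) :
    ∃ (m : Fin c →₀ ℕ) (r : R), ((tot m : ℕ) : ℤ) = (n : ℤ) - (n_z : ℤ) ∧
      r ∈ 𝒜 (u - u_z - wt d m) ∧
      (MvPolynomial.monomial m r) • sing y n_z x_z ∉ Q := by
  classical
  obtain ⟨x, hxu, hmem, hnot⟩ := hu
  rw [Submodule.mem_sup] at hmem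
  obtain ⟨q, hq, w, hw, hqw⟩ := hmem
  rw [Submodule.mem_span_singleton] at hw
  obtain ⟨a, rfl⟩ := hw
  obtain ⟨b, hbcl, hbe⟩ := key8 𝒜 ℳ y d hy hsmul n_z u_z x_z hxz a n u
  have h2 : sing y n x = compH ℳ y n u q + b • sing y n_z x_z := by
    rw [← compH_sing_same ℳ y n u x hxu, ← hqw, compH_add, hbe]
  have h3 : b • sing y n_z x_z ∉ Q := by
    intro hc
    exact hnot (h2 ▸ Submodule.add_mem _ (hQgr q hq n u) hc)
  obtain ⟨l, hl, hsum⟩ := AddSubmonoid.exists_list_of_mem_closure hbcl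
  have hexists : ∃ g ∈ l, g • sing y n_z x_z ∉ Q := by
    by_contra hall
    push_neg at hall
    apply h3
    rw [← hsum]
    clear hsum hl h3 h2 hbe hbcl
    induction l with
    | nil => rw [List.sum_nil, zero_smul]; exact Submodule.zero_mem _
    | cons g l ih =>
        rw [List.sum_cons, add_smul]
        exact Submodule.add_mem _ (hall g List.mem_cons_self)
          (ih (fun g' hg' => hall g' (List.mem_cons_of_mem g hg')))
  obtain ⟨g, hgl, hgz⟩ := hexists
  obtain ⟨m, r, hm1, hm2, rfl⟩ := hl g hgl
  exact ⟨m, r, hm1, hm2, hgz⟩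

include hsmul hy in
lemma piece (hA : ∀ i : ℤ, i < 0 → 𝒜 i = ⊥)
    (P Q : Submodule (MvPolynomial (Fin c) R) (HM R M y)) (hQgr : grA ℳ y Q)
    (n_z : ℕ) (u_z : ℤ) (x_z : M) (hxz : x_z ∈ ℳ u_z)
    (hzP : sing y n_z x_z ∈ P) (hzQ : sing y n_z x_z ∉ Q)
    (hmax : ∀ (n' : ℕ) (u' : ℤ) (x' : M), x' ∈ ℳ u' → sing y n' x' ∈ P → sing y n' x' ∉ Q →
      annH y Q (sing y n_z x_z) ≤ annH y Q (sing y n' x') →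
      annH y Q (sing y n' x') = annH y Q (sing y n_z x_z)) :
    GOOD ℳ y d (Q ⊔ Submodule.span _ {sing y n_z x_z}) Q := by
  classical
  set z := sing y n_z x_z with hz
  -- power fact
  have powfact : ∀ j : Fin c, (MvPolynomial.X j : MvPolynomial (Fin c) R) • z ∉ Q → ∀ k : ℕ, ∃ xk : M,
      xk ∈ ℳ (u_z + (k : ℤ) * d j) ∧ (MvPolynomial.X j : MvPolynomial (Fin c) R) ^ k • z = sing y (n_z + k) xk ∧
      (MvPolynomial.X j : MvPolynomial (Fin c) R) ^ k • z ∉ Q ∧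
      annH y Q ((MvPolynomial.X j : MvPolynomial (Fin c) R) ^ k • z) = annH y Q z := by
    intro j hXj
    intro k
    induction k with
    | zero =>
        refine ⟨x_z, by simpa using hxz, by rw [pow_zero, one_smul]; rfl, ?_, ?_⟩
        · rw [pow_zero, one_smul]; exact hzQ
        · rw [pow_zero, one_smul]
    | succ k ih =>
        obtain ⟨xk, hxk, hek, hnot, hann⟩ := ih
        have hXnot : (MvPolynomial.X j : MvPolynomial (Fin c) R)
            ∉ annH y Q ((MvPolynomial.X j : MvPolynomial (Fin c) R) ^ k • z) := by
          rw [hann]; exact hXj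
        have hstep : (MvPolynomial.X j : MvPolynomial (Fin c) R) ^ (k + 1) • z
            = (MvPolynomial.X j : MvPolynomial (Fin c) R) •
              ((MvPolynomial.X j : MvPolynomial (Fin c) R) ^ k • z) := by
          rw [pow_succ, mul_comm, mul_smul]
        have hnew : (MvPolynomial.X j : MvPolynomial (Fin c) R) ^ (k+1) • z
            = sing y (n_z + (k+1)) (y j • xk) := by
          rw [hstep, hek, X_smul_sing]
          congr 1
          omega
        have hmem : y j • xk ∈ ℳ (u_z + ((k:ℤ)+1) * d j) := by
          have := hsmul (d j) (u_z + (k:ℤ) * d j) (y j) (hy j) xk hxk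
          have he : d j + (u_z + (k:ℤ) * d j) = u_z + ((k:ℤ)+1) * d j := by ring
          rwa [he] at this
        have hnotQ : (MvPolynomial.X j : MvPolynomial (Fin c) R) ^ (k+1) • z ∉ Q := by
          rw [hstep]
          exact fun hc => hXnot hc
        have hsub : annH y Q z
            ≤ annH y Q ((MvPolynomial.X j : MvPolynomial (Fin c) R) ^ (k+1) • z) := by
          intro a ha
          rw [mem_annH] at ha ⊢
          have : a • ((MvPolynomial.X j : MvPolynomial (Fin c) R) ^ (k+1) • z)
              = (MvPolynomial.X j : MvPolynomial (Fin c) R)^(k+1) • (a • z) := by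
            rw [smul_smul, smul_smul, mul_comm]
          rw [this]
          exact Submodule.smul_mem _ _ ha
        have heq := hmax (n_z + (k+1)) (u_z + ((k:ℤ)+1)*d j) (y j • xk) hmem
          (by rw [← hnew]; exact Submodule.smul_mem _ _ hzP)
          (by rw [← hnew]; exact hnotQ) (by rw [← hnew]; exact hsub)
        refine ⟨y j • xk, ?_, ?_, hnotQ, by rw [hnew]; exact heq⟩
        · have he : u_z + ((k:ℤ)+1) * d j = u_z + ((k+1 : ℕ) : ℤ) * d j := by push_cast; ring
          rwa [he] at hmem
        · rw [hnew]
  set Good : Finset (Fin c) := Finset.univ.filter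
    (fun j => (MvPolynomial.X j : MvPolynomial (Fin c) R) • z ∉ Q) with hGoodDef
  by_cases hGood : Good.Nonempty
  · right
    obtain ⟨js, hjs, hminj⟩ := Finset.exists_min_image Good d hGood
    have hXjs : (MvPolynomial.X js : MvPolynomial (Fin c) R) • z ∉ Q := (Finset.mem_filter.1 hjs).2
    refine ⟨js, u_z - (n_z : ℤ) * d js, n_z, fun n hn => ?_⟩
    constructor
    · -- membership
      obtain ⟨xk, hxk, hek, hnot, _⟩ := powfact js hXjs (n - n_z)
      have hcast : ((n - n_z : ℕ) : ℤ) = (n : ℤ) - (n_z : ℤ) := by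
        rw [Nat.cast_sub hn]
      have hidx : u_z + ((n - n_z : ℕ) : ℤ) * d js = d js * (n : ℤ) + (u_z - (n_z:ℤ) * d js) := by
        rw [hcast]; ring
      have hnk : n_z + (n - n_z) = n := by omega
      refine ⟨xk, ?_, ?_, ?_⟩
      · rw [← hidx]; exact hxk
      · rw [← hnk, ← hek]
        exact Submodule.mem_sup_right
          (Submodule.smul_mem _ _ (Submodule.mem_span_singleton_self z))
      · rw [← hnk, ← hek]; exact hnot
    · -- lower bound
      intro u hu
      obtain ⟨m, r, hm1, hm2, hm3⟩ :=
        extract 𝒜 ℳ y d hy hsmul Q hQgr n_z u_z x_z hxz n u hu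
      have hr0 : r ≠ 0 := by
        intro h
        apply hm3
        rw [h, MvPolynomial.monomial_zero, zero_smul]
        exact Submodule.zero_mem _
      have he0 : 0 ≤ u - u_z - wt d m := by
        by_contra hlt
        push_neg at hlt
        rw [hA _ hlt, AddSubgroup.mem_bot] at hm2
        exact hr0 hm2
      have hsupp : ∀ j ∈ m.support, (MvPolynomial.X j : MvPolynomial (Fin c) R) • z ∉ Q := by
        intro j hj hXQ
        apply hm3
        have hfac : MvPolynomial.monomial m r
            = MvPolynomial.monomial (m - Finsupp.single j 1) r * MvPolynomial.X j := by
          rw [MvPolynomial.X, MvPolynomial.monomial_mul, mul_one]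
          congr 1
          rw [tsub_add_cancel_of_le]
          exact Finsupp.single_le_iff.2 (Nat.one_le_iff_ne_zero.2 (Finsupp.mem_support_iff.1 hj))
        rw [hfac, mul_smul]
        exact Submodule.smul_mem _ _ hXQ
      have hwt : ((n:ℤ) - (n_z:ℤ)) * d js ≤ wt d m := by
        calc ((n:ℤ) - (n_z:ℤ)) * d js = ((tot m : ℕ) : ℤ) * d js := by rw [hm1]
          _ = (∑ j ∈ m.support, (m j : ℤ)) * d js := by
              rw [tot, Finsupp.sum, Nat.cast_sum]
          _ = ∑ j ∈ m.support, (m j : ℤ) * d js := Finset.sum_mul _ _ _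
          _ ≤ ∑ j ∈ m.support, (m j : ℤ) * d j := by
              refine Finset.sum_le_sum (fun j hj => ?_)
              refine mul_le_mul_of_nonneg_left ?_ (Int.natCast_nonneg _)
              exact hminj j (Finset.mem_filter.2 ⟨Finset.mem_univ _, hsupp j hj⟩)
          _ = wt d m := by rw [wt, Finsupp.sum]
      linarith
  · left
    refine ⟨n_z + 1, fun n hn => ?_⟩
    rw [Set.eq_empty_iff_forall_notMem]
    intro u hu
    obtain ⟨m, r, hm1, hm2, hm3⟩ :=
      extract 𝒜 ℳ y d hy hsmul Q hQgr n_z u_z x_z hxz n u hu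
    have hsuppne : m.support.Nonempty := by
      rw [Finsupp.support_nonempty_iff]
      intro h
      rw [h] at hm1
      simp only [tot, Finsupp.sum_zero_index, Nat.cast_zero] at hm1
      omega
    obtain ⟨j, hj⟩ := hsuppne
    have hXQ : (MvPolynomial.X j : MvPolynomial (Fin c) R) • z ∈ Q := by
      by_contra hc
      exact hGood ⟨j, Finset.mem_filter.2 ⟨Finset.mem_univ _, hc⟩⟩
    apply hm3
    have hfac : MvPolynomial.monomial m r
        = MvPolynomial.monomial (m - Finsupp.single j 1) r * MvPolynomial.X j := by
      rw [MvPolynomial.X, MvPolynomial.monomial_mul, mul_one]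
      congr 1
      rw [tsub_add_cancel_of_le]
      exact Finsupp.single_le_iff.2 (Nat.one_le_iff_ne_zero.2 (Finsupp.mem_support_iff.1 hj))
    rw [hfac, mul_smul]
    exact Submodule.smul_mem _ _ hXQ

lemma suppPQ_union (P Q Q' : Submodule (MvPolynomial (Fin c) R) (HM R M y))
    (hQQ' : Q ≤ Q') (hQ'P : Q' ≤ P) (n : ℕ) :
    suppPQ ℳ y P Q n = suppPQ ℳ y P Q' n ∪ suppPQ ℳ y Q' Q n := by
  ext u
  constructor
  · rintro ⟨x, hxu, hP, hQ⟩
    by_cases hq' : sing y n x ∈ Q'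
    · exact Or.inr ⟨x, hxu, hq', hQ⟩
    · exact Or.inl ⟨x, hxu, hP, hq'⟩
  · rintro (⟨x, hxu, hP, hQ'⟩ | ⟨x, hxu, hQ', hQ⟩)
    · exact ⟨x, hxu, hP, fun hc => hQ' (hQQ' hc)⟩
    · exact ⟨x, hxu, hQ'P hQ', hQ⟩

lemma min_add_left (a e e' : ℤ) : min (a + e) (a + e') = a + min e e' := by
  rcases le_total e e' with h | h
  · rw [min_eq_left h, min_eq_left (by omega)]
  · rw [min_eq_right h, min_eq_right (by omega)]

lemma min_affine (j j' : Fin c) (b b' : ℤ) :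
    ∃ (j'' : Fin c) (b'' : ℤ) (n₂ : ℕ), ∀ n : ℕ, n ≥ n₂ →
      min (d j * n + b) (d j' * n + b') = d j'' * n + b'' := by
  rcases le_total (d j) (d j') with h | h
  · rcases eq_or_lt_of_le h with heq | hlt
    · exact ⟨j, min b b', 0, fun n _ => by rw [← heq, min_add_left]⟩
    · refine ⟨j, b, (b - b').toNat, fun n hn => ?_⟩
      have h1 : (b - b' : ℤ) ≤ n := le_trans (Int.self_le_toNat _) (by exact_mod_cast hn)
      refine min_eq_left ?_
      have h2 : (1 : ℤ) * n ≤ (d j' - d j) * n :=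
        mul_le_mul_of_nonneg_right (by omega) (Int.natCast_nonneg _)
      linarith
  · rcases eq_or_lt_of_le h with heq | hlt
    · exact ⟨j, min b b', 0, fun n _ => by rw [heq, min_add_left]⟩
    · refine ⟨j', b', (b' - b).toNat, fun n hn => ?_⟩
      have h1 : (b' - b : ℤ) ≤ n := le_trans (Int.self_le_toNat _) (by exact_mod_cast hn)
      refine min_eq_right ?_
      have h2 : (1 : ℤ) * n ≤ (d j - d j') * n :=
        mul_le_mul_of_nonneg_right (by omega) (Int.natCast_nonneg _)
      linarith

lemma GOOD_trans (P Q Q' : Submodule (MvPolynomial (Fin c) R) (HM R M y))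
    (hQQ' : Q ≤ Q') (hQ'P : Q' ≤ P)
    (h1 : GOOD ℳ y d P Q') (h2 : GOOD ℳ y d Q' Q) : GOOD ℳ y d P Q := by
  rcases h1 with ⟨n₁, h1⟩ | ⟨j, b, n₁, h1⟩
  · rcases h2 with ⟨n₂, h2⟩ | ⟨j', b', n₂, h2⟩
    · left
      refine ⟨max n₁ n₂, fun n hn => ?_⟩
      rw [suppPQ_union ℳ y P Q Q' hQQ' hQ'P, h1 n (le_trans (le_max_left _ _) hn),
        h2 n (le_trans (le_max_right _ _) hn), Set.union_empty]
    · right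
      refine ⟨j', b', max n₁ n₂, fun n hn => ?_⟩
      rw [suppPQ_union ℳ y P Q Q' hQQ' hQ'P, h1 n (le_trans (le_max_left _ _) hn),
        Set.empty_union]
      exact h2 n (le_trans (le_max_right _ _) hn)
  · rcases h2 with ⟨n₂, h2⟩ | ⟨j', b', n₂, h2⟩
    · right
      refine ⟨j, b, max n₁ n₂, fun n hn => ?_⟩
      rw [suppPQ_union ℳ y P Q Q' hQQ' hQ'P, h2 n (le_trans (le_max_right _ _) hn),
        Set.union_empty]
      exact h1 n (le_trans (le_max_left _ _) hn)
    · right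
      obtain ⟨j'', b'', n₃, h3⟩ := min_affine d j j' b b'
      refine ⟨j'', b'', max (max n₁ n₂) n₃, fun n hn => ?_⟩
      rw [suppPQ_union ℳ y P Q Q' hQQ' hQ'P, ← h3 n (le_trans (le_max_right _ _) hn)]
      exact IsLeast.union (h1 n (by omega)) (h2 n (by omega))

lemma GOOD_self (P : Submodule (MvPolynomial (Fin c) R) (HM R M y)) : GOOD ℳ y d P P :=
  Or.inl ⟨0, fun n _ => Set.eq_empty_iff_forall_notMem.2
    (fun u ⟨x, _, hP, hQ⟩ => hQ hP)⟩

include hsmul hy in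
lemma main_induction (hA : ∀ i : ℤ, i < 0 → 𝒜 i = ⊥)
    (P : Submodule (MvPolynomial (Fin c) R) (HM R M y)) (hPgr : grA ℳ y P)
    [hNoethP : IsNoetherian (MvPolynomial (Fin c) R) ↥P]
    [hNoethA : IsNoetherianRing (MvPolynomial (Fin c) R)] :
    ∀ Q ≤ P, grA ℳ y Q → GOOD ℳ y d P Q := by
  classical
  by_contra hcon
  push_neg at hcon
  obtain ⟨Q₀, hQ₀P, hQ₀gr, hQ₀bad⟩ := hcon
  set A := MvPolynomial (Fin c) R with hAdef
  -- pass to submodules of ↥P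
  set 𝔅 : Set (Submodule A ↥P) := {Q' | grA ℳ y (Q'.map P.subtype) ∧
    ¬ GOOD ℳ y d P (Q'.map P.subtype)} with h𝔅
  have h𝔅ne : 𝔅.Nonempty := by
    refine ⟨Q₀.comap P.subtype, ?_, ?_⟩
    · rwa [Submodule.map_comap_subtype, inf_of_le_right hQ₀P]
    · rwa [Submodule.map_comap_subtype, inf_of_le_right hQ₀P]
  obtain ⟨Qm, hQm𝔅, hQmmax⟩ :=
    set_has_maximal_iff_noetherian.2 hNoethP 𝔅 h𝔅ne
  set Qs := Qm.map P.subtype with hQs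
  have hQsP : Qs ≤ P := Submodule.map_subtype_le P Qm
  have hQsgr : grA ℳ y Qs := hQm𝔅.1
  have hQsbad : ¬ GOOD ℳ y d P Qs := hQm𝔅.2
  -- maximality transfer
  have hmaxQ : ∀ Q'' : Submodule A (HM R M y), Q'' ≤ P → Qs < Q'' → grA ℳ y Q'' →
      GOOD ℳ y d P Q'' := by
    intro Q'' hQ''P hlt hgr
    by_contra hbad
    have hmem : Q''.comap P.subtype ∈ 𝔅 := by
      constructor
      · rwa [Submodule.map_comap_subtype, inf_of_le_right hQ''P]
      · rwa [Submodule.map_comap_subtype, inf_of_le_right hQ''P]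
    refine hQmmax _ hmem ?_
    have h1 : Qm = Qs.comap P.subtype := by
      rw [hQs, Submodule.comap_map_eq_of_injective (Submodule.injective_subtype P)]
    rw [h1]
    refine lt_of_le_of_ne (Submodule.comap_mono (le_of_lt hlt)) ?_
    intro heq
    have := congrArg (Submodule.map P.subtype) heq
    rw [Submodule.map_comap_subtype, Submodule.map_comap_subtype,
      inf_of_le_right hQsP, inf_of_le_right hQ''P] at this
    exact (ne_of_lt hlt) this
  -- find a bihomogeneous element of P \ Qs
  have hQsneP : Qs ≠ P := by
    intro h
    exact hQsbad (h ▸ GOOD_self ℳ y d P)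
  obtain ⟨f, hfP, hfQs⟩ : ∃ f, f ∈ P ∧ f ∉ Qs := by
    by_contra hall
    push_neg at hall
    exact hQsneP (le_antisymm hQsP (fun w hw => hall w hw))
  have hbihom : ∃ (n' : ℕ) (u' : ℤ) (x' : M), x' ∈ ℳ u' ∧
      sing y n' x' ∈ P ∧ sing y n' x' ∉ Qs := by
    by_contra hnone
    push_neg at hnone
    apply hfQs
    -- f = ∑ over coefficients and components of compH pieces
    have hf1 : f = ∑ n ∈ (PolynomialModule.coeff (show PolynomialModule R M from f)).support, sing y n (f n) := by
      apply PolynomialModule.ext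
      exact (Finsupp.sum_single _).symm.trans (PolynomialModule.coeff_sum _ _).symm
    rw [hf1]
    refine Submodule.sum_mem _ (fun n _ => ?_)
    have hf2 : sing y n (f n) = ∑ u ∈ dsupp ℳ (f n), sing y n (dcomp ℳ u (f n)) := by
      conv_lhs => rw [← sum_dsupp_dcomp ℳ (f n)]
      exact map_sum (PolynomialModule.lsingle R n) (fun u => dcomp ℳ u (f n)) (dsupp ℳ (f n))
    rw [hf2]
    refine Submodule.sum_mem _ (fun u _ => ?_)
    have hinP : compH ℳ y n u f ∈ P := hPgr f hfP n u
    exact hnone n u _ (dcomp_mem ℳ u (f n)) hinP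
  obtain ⟨n₀', u₀', x₀', hb1, hb2, hb3⟩ := hbihom
  -- choose a bihomogeneous element with maximal annihilator
  set 𝔄 : Set (Ideal A) := {K | ∃ (n' : ℕ) (u' : ℤ) (x' : M), x' ∈ ℳ u' ∧
    sing y n' x' ∈ P ∧ sing y n' x' ∉ Qs ∧ K = annH y Qs (sing y n' x')} with h𝔄
  have h𝔄ne : 𝔄.Nonempty := ⟨_, n₀', u₀', x₀', hb1, hb2, hb3, rfl⟩
  obtain ⟨K, hK𝔄, hKmax⟩ :=
    set_has_maximal_iff_noetherian.2 (isNoetherianRing_iff.1 hNoethA) 𝔄 h𝔄ne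
  obtain ⟨n_z, u_z, x_z, hxz, hzP, hzQ, hKeq⟩ := hK𝔄
  have hmax' : ∀ (n' : ℕ) (u' : ℤ) (x' : M), x' ∈ ℳ u' → sing y n' x' ∈ P →
      sing y n' x' ∉ Qs →
      annH y Qs (sing y n_z x_z) ≤ annH y Qs (sing y n' x') →
      annH y Qs (sing y n' x') = annH y Qs (sing y n_z x_z) := by
    intro n' u' x' h1 h2 h3 hle
    by_contra hne
    have hlt : annH y Qs (sing y n_z x_z) < annH y Qs (sing y n' x') :=
      lt_of_le_of_ne hle (Ne.symm hne)
    exact hKmax _ ⟨n', u', x', h1, h2, h3, rfl⟩ (hKeq ▸ hlt)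
  set Q' := Qs ⊔ Submodule.span A {sing y n_z x_z} with hQ'def
  have hQ'gr : grA ℳ y Q' := by
    intro f hf n u
    rw [hQ'def, Submodule.mem_sup] at hf
    obtain ⟨q, hq, w, hw, rfl⟩ := hf
    rw [Submodule.mem_span_singleton] at hw
    obtain ⟨a, rfl⟩ := hw
    obtain ⟨b, hbcl, hbe⟩ := key8 𝒜 ℳ y d hy hsmul n_z u_z x_z hxz a n u
    rw [compH_add, hbe]
    exact Submodule.add_mem _ (Submodule.mem_sup_left (hQsgr q hq n u))
      (Submodule.mem_sup_right (Submodule.mem_span_singleton.2 ⟨b, rfl⟩))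
  have hQ'P : Q' ≤ P := sup_le hQsP (Submodule.span_le.2 (Set.singleton_subset_iff.2 hzP))
  have hQ'lt : Qs < Q' := by
    refine lt_of_le_of_ne le_sup_left (fun h => hzQ ?_)
    rw [h]
    exact Submodule.mem_sup_right (Submodule.mem_span_singleton_self _)
  have hGOOD1 : GOOD ℳ y d P Q' := hmaxQ Q' hQ'P hQ'lt hQ'gr
  have hGOOD2 : GOOD ℳ y d Q' Qs :=
    piece 𝒜 ℳ y d hy hsmul hA P Qs hQsgr n_z u_z x_z hxz hzP hzQ hmax'
  exact hQsbad (GOOD_trans ℳ y d P Qs Q' le_sup_left hQ'P hGOOD1 hGOOD2)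

end Core

/-- Same setup as Statement 9.  Assume `(0 :_M I) = 0` and let `p` be
a prime ideal with `I ⊆ p` and `p ∈ Ass_R(M / I^n N)` for all sufficiently large `n`.
Then there are `a ∈ {d 1, …, d c}` and `b ∈ ℤ` such that `v_p(M / I^n N) = a * n + b` for
all sufficiently large `n`, where `v_p(M / I^n N)` is the least degree of a homogeneous
`x ∈ M` with `p = (I^n N :_R x)`. -/
theorem v_number_at_prime_of_M_mod_InN_eventually_linear
    {R M : Type*} [CommRing R] [IsNoetherianRing R]
    [AddCommGroup M] [Module R M] [Module.Finite R M]
    (𝒜 : ℤ → AddSubgroup R) (ℳ : ℤ → AddSubgroup M)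
    [GradedRing 𝒜] [DirectSum.Decomposition ℳ]
    (hsmul : ∀ (i j : ℤ), ∀ r ∈ 𝒜 i, ∀ x ∈ ℳ j, r • x ∈ ℳ (i + j))
    (hA : ∀ i : ℤ, i < 0 → 𝒜 i = ⊥)
    (I : Ideal R) (hI : Ideal.IsHomogeneous 𝒜 I)
    (N : Submodule R M) (hN : ∀ x ∈ N, ∀ i : ℤ, (DirectSum.decompose ℳ x i : M) ∈ N)
    (c : ℕ) (y : Fin c → R) (d : Fin c → ℤ) (hdmono : Monotone d)
    (hy : ∀ j, y j ∈ 𝒜 (d j))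
    (J : Ideal R) (hJgen : J = Ideal.span (Set.range y)) (hJI : J ≤ I)
    (m0 : ℕ) (hred : J * I ^ m0 = I ^ (m0 + 1))
    (h0 : ∀ x : M, (∀ r ∈ I, r • x = 0) → x = 0)
    (p : Ideal R) (hp : p.IsPrime) (hIp : I ≤ p)
    (hass : ∃ n₀ : ℕ, ∀ n ≥ n₀, ∃ x : M,
      ∀ r : R, r ∈ p ↔ r • x ∈ (I ^ n • N : Submodule R M)) :
    ∃ j : Fin c, ∃ b : ℤ, ∃ n₁ : ℕ, ∀ n ≥ n₁,
      sInf {u : ℤ | ∃ x ∈ ℳ u,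
        ∀ r : R, r ∈ p ↔ r • x ∈ (I ^ n • N : Submodule R M)} = d j * (n : ℤ) + b := by
  classical
  obtain ⟨n₀, hass⟩ := hass
  set A := MvPolynomial (Fin c) R with hAdef
  set L : ℕ → Submodule R M := fun n => (I ^ n • N : Submodule R M) with hLdef
  have hNgr : GrSub ℳ N := fun x hx i => hN x hx i
  have hLgr : ∀ n, GrSub ℳ (L n) := fun n => GrSub.powSmul 𝒜 ℳ hsmul hI hNgr n
  -- p is homogeneous
  obtain ⟨x₀, hx₀⟩ := hass n₀ le_rfl
  have hphom : ∀ r ∈ p, ∀ e : ℤ, dcomp 𝒜 e r ∈ p :=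
    p_homog 𝒜 ℳ hsmul (hLgr n₀) hp hx₀
  have h1p : (1 : R) ∉ p := fun h => hp.ne_top ((Ideal.eq_top_iff_one p).2 h)
  have hyI : ∀ j, y j ∈ I := fun j => hJI (hJgen ▸ Ideal.subset_span ⟨j, rfl⟩)
  have hIL : ∀ (n : ℕ), ∀ w ∈ L n, ∀ r ∈ I, r • w ∈ L (n + 1) := by
    intro n w hw r hr
    have h1 : r • w ∈ I • (I ^ n • N : Submodule R M) := Submodule.smul_mem_smul hr hw
    have h2 : I • (I ^ n • N : Submodule R M) = (I ^ (n+1) • N : Submodule R M) := by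
      rw [← Submodule.smul_assoc, Ideal.smul_eq_mul, ← pow_succ']
    rw [hLdef]
    show r • w ∈ (I ^ (n+1) • N : Submodule R M)
    rw [← h2]; exact h1
  -- the two families
  set 𝒩 : ℕ → Submodule R M := fun n =>
    { carrier := {x | ∀ r ∈ p, r • x ∈ L n}
      add_mem' := fun hx hx' r hr => by
        rw [smul_add]; exact Submodule.add_mem _ (hx r hr) (hx' r hr)
      zero_mem' := fun r hr => by rw [smul_zero]; exact Submodule.zero_mem _
      smul_mem' := fun a x hx r hr => by
        rw [smul_comm]; exact Submodule.smul_mem _ _ (hx r hr) } with h𝒩def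
  have mem𝒩 : ∀ (n : ℕ) (x : M), x ∈ 𝒩 n ↔ ∀ r ∈ p, r • x ∈ L n := fun n x => Iff.rfl
  set 𝒦 : ℕ → Submodule R M := fun n =>
    { carrier := {x | ∃ (s : R) (e : ℤ), s ∈ 𝒜 e ∧ s ∉ p ∧ s • x ∈ L n}
      add_mem' := by
        rintro x x' ⟨s, e, hs1, hs2, hs3⟩ ⟨s', e', hs1', hs2', hs3'⟩
        refine ⟨s * s', e + e', SetLike.mul_mem_graded hs1 hs1', ?_, ?_⟩
        · intro hmem
          rcases hp.mem_or_mem hmem with h | h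
          exacts [hs2 h, hs2' h]
        · rw [smul_add]
          refine Submodule.add_mem _ ?_ ?_
          · rw [mul_comm, mul_smul]
            exact Submodule.smul_mem _ _ hs3
          · rw [mul_smul]
            exact Submodule.smul_mem _ _ hs3'
      zero_mem' := ⟨1, 0, SetLike.one_mem_graded 𝒜, h1p, by
        rw [smul_zero]; exact Submodule.zero_mem _⟩
      smul_mem' := by
        rintro a x ⟨s, e, hs1, hs2, hs3⟩
        exact ⟨s, e, hs1, hs2, by rw [smul_comm]; exact Submodule.smul_mem _ _ hs3⟩ } with h𝒦def
  have mem𝒦 : ∀ (n : ℕ) (x : M), x ∈ 𝒦 n ↔ ∃ (s : R) (e : ℤ), s ∈ 𝒜 e ∧ s ∉ p ∧ s • x ∈ L n :=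
    fun n x => Iff.rfl
  -- stability under y j
  have hC𝒩 : ∀ (j : Fin c) (n : ℕ), ∀ x ∈ 𝒩 n, y j • x ∈ 𝒩 (n + 1) := by
    intro j n x hx r hr
    rw [smul_comm]
    exact hIL n _ (hx r hr) _ (hyI j)
  have hCQ : ∀ (j : Fin c) (n : ℕ), ∀ x ∈ (𝒩 n ⊓ 𝒦 n : Submodule R M),
      y j • x ∈ (𝒩 (n+1) ⊓ 𝒦 (n+1) : Submodule R M) := by
    rintro j n x ⟨hx1, hx2⟩
    refine ⟨hC𝒩 j n x hx1, ?_⟩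
    obtain ⟨s, e, hs1, hs2, hs3⟩ := hx2
    exact ⟨s, e, hs1, hs2, by rw [smul_comm]; exact hIL n _ hs3 _ (hyI j)⟩
  -- gradedness of the families
  have h𝒩gr : ∀ n, GrSub ℳ (𝒩 n) := by
    intro n x hx u r hr
    have hsum : r • dcomp ℳ u x = ∑ e ∈ dsupp 𝒜 r, dcomp 𝒜 e r • dcomp ℳ u x := by
      conv_lhs => rw [← sum_dsupp_dcomp 𝒜 r, Finset.sum_smul]
    rw [hsum]
    refine Submodule.sum_mem _ (fun e _ => ?_)
    rw [← dcomp_smul_homog 𝒜 ℳ hsmul (dcomp_mem 𝒜 e r) x u]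
    exact hLgr n _ (hx _ (hphom r hr e)) _
  have h𝒦gr : ∀ n, GrSub ℳ (𝒦 n) := by
    rintro n x ⟨s, e, hs1, hs2, hs3⟩ u
    exact ⟨s, e, hs1, hs2, by
      rw [← dcomp_smul_homog 𝒜 ℳ hsmul hs1 x u]
      exact hLgr n _ hs3 _⟩
  -- the two A-submodules
  set P : Submodule A (HM R M y) := famSub y 𝒩 hC𝒩 with hPdef
  set Q : Submodule A (HM R M y) := famSub y (fun n => 𝒩 n ⊓ 𝒦 n) hCQ with hQdef
  have hQP : Q ≤ P := by
    intro f hf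
    rw [hQdef, mem_famSub_iff] at hf
    rw [hPdef, mem_famSub_iff]
    exact fun n => (hf n).1
  have grP : grA ℳ y P := by
    intro f hf n u
    show sing y n (dcomp ℳ u (f n)) ∈ P
    rw [hPdef, sing_mem_famSub_iff]
    exact h𝒩gr n (f n) (hf n) u
  have grQ : grA ℳ y Q := by
    intro f hf n u
    show sing y n (dcomp ℳ u (f n)) ∈ Q
    rw [hQdef, sing_mem_famSub_iff]
    obtain ⟨h1, h2⟩ := hf n
    exact ⟨h𝒩gr n (f n) h1 u, h𝒦gr n (f n) h2 u⟩
  -- Noetherianity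
  have hred' : Ideal.span (Set.range y) * I ^ m0 = I ^ (m0 + 1) := by rwa [← hJgen]
  haveI hNP : IsNoetherian A ↥P :=
    noeth_famN y I N m0 hred' p hIp h0 𝒩 hC𝒩 (fun n x hx r hr => hx r hr)
  have hGOOD : GOOD ℳ y d P Q := main_induction 𝒜 ℳ y d hy hsmul hA P grP Q hQP grQ
  -- the support sets agree with the v-number sets
  have hSn : ∀ n : ℕ, {u : ℤ | ∃ x ∈ ℳ u,
      ∀ r : R, r ∈ p ↔ r • x ∈ (I ^ n • N : Submodule R M)} = suppPQ ℳ y P Q n := by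
    intro n
    ext u
    simp only [Set.mem_setOf_eq, suppPQ]
    constructor
    · rintro ⟨x, hxu, hiff⟩
      refine ⟨x, hxu, ?_, ?_⟩
      · rw [hPdef, sing_mem_famSub_iff]
        exact fun r hr => (hiff r).1 hr
      · rw [hQdef, sing_mem_famSub_iff]
        rintro ⟨-, ⟨s, e, hs1, hs2, hs3⟩⟩
        exact hs2 ((hiff s).2 hs3)
    · rintro ⟨x, hxu, hPm, hQm⟩
      rw [hPdef, sing_mem_famSub_iff] at hPm
      rw [hQdef, sing_mem_famSub_iff] at hQm
      refine ⟨x, hxu, fun r => ⟨fun hr => hPm r hr, fun hrx => ?_⟩⟩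
      by_contra hrp
      have hex : ∃ e, dcomp 𝒜 e r ∉ p := by
        by_contra hall
        push_neg at hall
        apply hrp
        have hre : r = ∑ e ∈ dsupp 𝒜 r, dcomp 𝒜 e r := (sum_dsupp_dcomp 𝒜 r).symm
        rw [hre]
        exact Submodule.sum_mem _ (fun e _ => hall e)
      obtain ⟨e, he⟩ := hex
      apply hQm
      refine ⟨hPm, ⟨dcomp 𝒜 e r, e, dcomp_mem 𝒜 e r, he, ?_⟩⟩
      rw [← dcomp_homog_smul 𝒜 ℳ hsmul hxu r e]
      exact hLgr n _ hrx _
  -- nonemptiness of the support for n ≥ n₀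
  have hne : ∀ n, n₀ ≤ n → (suppPQ ℳ y P Q n).Nonempty := by
    intro n hn
    obtain ⟨x, hx⟩ := hass n hn
    have hx𝒩 : x ∈ 𝒩 n := fun r hr => (hx r).1 hr
    by_contra hempty
    rw [Set.not_nonempty_iff_eq_empty] at hempty
    have hcomp𝒦 : ∀ u ∈ dsupp ℳ x, dcomp ℳ u x ∈ 𝒦 n := by
      intro u hu
      by_contra hk
      have : u ∈ suppPQ ℳ y P Q n := by
        refine ⟨dcomp ℳ u x, dcomp_mem ℳ u x, ?_, ?_⟩
        · rw [hPdef, sing_mem_famSub_iff]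
          exact h𝒩gr n x hx𝒩 u
        · rw [hQdef, sing_mem_famSub_iff]
          rintro ⟨-, hk'⟩
          exact hk hk'
      rw [hempty] at this
      exact Set.notMem_empty _ this
    have hcomp𝒦' : ∀ u : ℤ, ∃ (s : R) (e : ℤ), s ∈ 𝒜 e ∧ s ∉ p ∧
        (u ∈ dsupp ℳ x → s • dcomp ℳ u x ∈ L n) := by
      intro u
      by_cases hu : u ∈ dsupp ℳ x
      · obtain ⟨s, e, h1, h2, h3⟩ := hcomp𝒦 u hu
        exact ⟨s, e, h1, h2, fun _ => h3⟩
      · exact ⟨1, 0, SetLike.one_mem_graded 𝒜, h1p, fun h => absurd h hu⟩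
    choose sfun efun hsf1 hsf2 hsf3 using hcomp𝒦'
    have hprodnp : ∀ t : Finset ℤ, (∏ u ∈ t, sfun u) ∉ p := by
      intro t
      induction t using Finset.induction with
      | empty => simpa using h1p
      | insert _ _ hnm ih =>
          rw [Finset.prod_insert hnm]
          intro hmem
          rcases hp.mem_or_mem hmem with h | h
          · exact hsf2 _ h
          · exact ih h
    set s := ∏ u ∈ dsupp ℳ x, sfun u with hsdef
    have hsx : s • x ∈ L n := by
      have h1 : s • x = ∑ u ∈ dsupp ℳ x, s • dcomp ℳ u x := by
        conv_lhs => rw [← sum_dsupp_dcomp ℳ x, Finset.smul_sum]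
      rw [h1]
      refine Submodule.sum_mem _ (fun u hu => ?_)
      have h2 : s = sfun u * ∏ u' ∈ (dsupp ℳ x).erase u, sfun u' :=
        (Finset.mul_prod_erase _ _ hu).symm
      rw [h2, mul_comm, mul_smul]
      exact Submodule.smul_mem _ _ (hsf3 u hu)
    exact hprodnp _ ((hx s).2 hsx)
  -- conclude
  rcases hGOOD with ⟨n₁, hemp⟩ | ⟨j, b, n₁, hleast⟩
  · exfalso
    obtain ⟨u, hu⟩ := hne (max n₀ n₁) (le_max_left _ _)
    rw [hemp _ (le_max_right _ _)] at hu
    exact Set.notMem_empty _ hu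
  · refine ⟨j, b, max n₀ n₁, fun n hn => ?_⟩
    rw [hSn n]
    exact (hleast n (le_trans (le_max_right _ _) hn)).csInf_eq

-- axiom check
-- #print axioms v_number_at_prime_of_M_mod_InN_eventually_linear
end

section
/- Assume (0 :_M I) = 0, and assume Ass_R(I^n M / I^{n+1} N) = Ass_R(M / I^{n+1} N) for all sufficiently large n. Let p be a prime ideal of R with I ⊆ p and p ∈ Ass_R(M / I^n N) for all sufficiently large n. Then v_p(I^n M / I^{n+1} N) = v_p(M / I^{n+1} N) for all sufficiently large n. -/
open Submodule

universe u

/-- Key lemma (same universe): if `(0 :_M I) = 0` then for all large `n`, any `x` with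
`I x ⊆ I^(n+1) M` lies in `I^n M`. -/
theorem colon_key
    {R M : Type u} [CommRing R] [IsNoetherianRing R]
    [AddCommGroup M] [Module R M] [Module.Finite R M]
    (I : Ideal R) (h0 : ∀ x : M, (∀ r ∈ I, r • x = 0) → x = 0) :
    ∃ n₀ : ℕ, ∀ n ≥ n₀, ∀ x : M,
      (∀ r ∈ I, r • x ∈ (I ^ (n + 1) • ⊤ : Submodule R M)) →
      x ∈ (I ^ n • ⊤ : Submodule R M) := by
  classical
  obtain ⟨s, hs⟩ : ∃ s : Finset R, Ideal.span (↑s : Set R) = I :=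
    (IsNoetherian.noetherian I)
  -- the map x ↦ (a • x)_{a ∈ s}
  set φ : M →ₗ[R] (↥s → M) := LinearMap.pi (fun i => LinearMap.lsmul R M (i : R)) with hφ
  have hsmulzero : ∀ x : M, (∀ i : ↥s, (i : R) • x = 0) → ∀ r ∈ I, r • x = 0 := by
    intro x hx r hr
    rw [← hs] at hr
    refine Submodule.span_induction (hx := hr) (fun a ha => hx ⟨a, ha⟩) (by simp) ?_ ?_
    · intro a b _ _ ha hb; rw [add_smul, ha, hb, add_zero]
    · intro c a _ ha; rw [smul_eq_mul, mul_smul, ha, smul_zero]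
  have hφinj : Function.Injective φ := by
    rw [← LinearMap.ker_eq_bot, LinearMap.ker_eq_bot']
    intro x hx
    exact h0 x (hsmulzero x (fun i => congrFun hx i))
  -- colon submodules
  set K : ℕ → Submodule R M := fun n =>
    { carrier := {x | ∀ r ∈ I, r • x ∈ (I ^ (n + 1) • ⊤ : Submodule R M)}
      add_mem' := fun {a b} ha hb r hr => by
        rw [smul_add]; exact Submodule.add_mem _ (ha r hr) (hb r hr)
      zero_mem' := fun r hr => by rw [smul_zero]; exact Submodule.zero_mem _
      smul_mem' := fun c x hx r hr => by
        rw [smul_comm]; exact Submodule.smul_mem _ c (hx r hr) } with hK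
  have hIK : ∀ n, I • K n ≤ (I ^ (n + 1) • ⊤ : Submodule R M) := by
    intro n
    rw [Submodule.smul_le]
    intro r hr x hx
    exact hx r hr
  -- pi pow-smul facts
  have hpi_le : ∀ k : ℕ, Submodule.pi Set.univ (fun _ : ↥s => (I ^ k • ⊤ : Submodule R M))
      ≤ (I ^ k • ⊤ : Submodule R (↥s → M)) := by
    intro k
    rw [← Submodule.iSup_map_single]
    refine iSup_le fun i => ?_
    rw [Submodule.map_smul'']
    exact Submodule.smul_mono le_rfl le_top
  have hφK : ∀ n, (K n).map φ =
      (I ^ (n + 1) • ⊤ : Submodule R (↥s → M)) ⊓ LinearMap.range φ := by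
    intro n
    apply le_antisymm
    · rintro _ ⟨x, hx, rfl⟩
      refine ⟨hpi_le _ ?_, ⟨x, rfl⟩⟩
      rw [Submodule.mem_pi]
      intro i _
      exact hx (i : R) (hs ▸ Ideal.subset_span i.2)
    · rintro v ⟨hv, x, rfl⟩
      refine ⟨x, ?_, rfl⟩
      intro r hr
      rw [← hs] at hr
      refine Submodule.span_induction (hx := hr) ?_ (by simp) ?_ ?_
      · intro a ha
        have h1 := Submodule.mem_map_of_mem (f := LinearMap.proj (R := R)
          (φ := fun _ : ↥s => M) (⟨a, ha⟩ : ↥s)) hv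
        rw [Submodule.map_smul''] at h1
        exact Submodule.smul_mono le_rfl le_top h1
      · intro a b _ _ ha hb; rw [add_smul]; exact Submodule.add_mem _ ha hb
      · intro c a _ ha; rw [smul_eq_mul, mul_smul]; exact Submodule.smul_mem _ c ha
  -- the filtration
  set G : I.Filtration (↥s → M) :=
    (I.stableFiltration (I • ⊤)) ⊓ (I.trivialFiltration (LinearMap.range φ)) with hG
  have hGN : ∀ n, G.N n = (I ^ (n + 1) • ⊤ : Submodule R (↥s → M)) ⊓ LinearMap.range φ := by
    intro n
    show (I ^ n • (I • ⊤) : Submodule R (↥s → M)) ⊓ LinearMap.range φ = _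
    rw [← Submodule.smul_assoc, smul_eq_mul, ← pow_succ]
  have hGstable : G.Stable := by
    rw [hG]; exact Ideal.Filtration.Stable.inter_right (I.trivialFiltration (LinearMap.range φ)) (Ideal.stableFiltration_stable I _)
  obtain ⟨n₀, hn₀⟩ := hGstable
  refine ⟨n₀ + 1, fun n hn x hx => ?_⟩
  obtain ⟨k, rfl⟩ : ∃ k, n = k + 1 := ⟨n - 1, by omega⟩
  have hk : k ≥ n₀ := by omega
  have h1 : φ x ∈ G.N (k + 1) := by
    rw [hGN, ← hφK]
    exact Submodule.mem_map_of_mem hx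
  rw [← hn₀ k hk, hGN, ← hφK, ← Submodule.map_smul''] at h1
  obtain ⟨z, hz, hzx⟩ := h1
  have hzx' := hφinj hzx
  subst hzx'
  exact Submodule.smul_mono (Ideal.pow_le_pow_right (by omega)) le_rfl (hIK k hz)

/-- Key lemma, arbitrary universes. -/
theorem colon_key'
    {R M : Type*} [CommRing R] [IsNoetherianRing R]
    [AddCommGroup M] [Module R M] [Module.Finite R M]
    (I : Ideal R) (h0 : ∀ x : M, (∀ r ∈ I, r • x = 0) → x = 0) :
    ∃ n₀ : ℕ, ∀ n ≥ n₀, ∀ x : M,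
      (∀ r ∈ I, r • x ∈ (I ^ (n + 1) • ⊤ : Submodule R M)) →
      x ∈ (I ^ n • ⊤ : Submodule R M) := by
  obtain ⟨m, π, hπ⟩ := Module.Finite.exists_fin' R M
  let M₀ := (Fin m → R) ⧸ LinearMap.ker π
  let e : M₀ ≃ₗ[R] M := π.quotKerEquivOfSurjective hπ
  have hmap : ∀ k : ℕ, Submodule.map (e : M₀ →ₗ[R] M) (I ^ k • ⊤ : Submodule R M₀)
      = (I ^ k • ⊤ : Submodule R M) := by
    intro k
    rw [Submodule.map_smul'', Submodule.map_top, LinearEquiv.range]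
  have h0' : ∀ x : M₀, (∀ r ∈ I, r • x = 0) → x = 0 := by
    intro x hx
    refine e.injective ?_
    rw [map_zero]
    refine h0 (e x) fun r hr => ?_
    rw [← map_smul, hx r hr, map_zero]
  obtain ⟨n₀, hn₀⟩ := colon_key I h0'
  refine ⟨n₀, fun n hn x hx => ?_⟩
  have hx₀ : e.symm x ∈ (I ^ n • ⊤ : Submodule R M₀) := by
    refine hn₀ n hn _ fun r hr => ?_
    have h2 : r • x ∈ Submodule.map (e : M₀ →ₗ[R] M) (I ^ (n+1) • ⊤ : Submodule R M₀) := by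
      rw [hmap]; exact hx r hr
    obtain ⟨z, hz, hze⟩ := h2
    have h4 : e.symm (r • x) = z := by rw [← hze]; exact e.symm_apply_apply z
    have h3 : r • e.symm x = e.symm (r • x) := (map_smul e.symm r x).symm
    rw [h3, h4]; exact hz
  have : x = e (e.symm x) := (e.apply_symm_apply x).symm
  rw [this, ← hmap n]
  exact Submodule.mem_map_of_mem hx₀

/-- Same setup as Statement 9.  Assume `(0 :_M I) = 0`, assume
`Ass_R(I^n M / I^(n+1) N) = Ass_R(M / I^(n+1) N)` for all sufficiently large `n`, and let
`p` be a prime ideal with `I ⊆ p` and `p ∈ Ass_R(M / I^n N)` for all sufficiently large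
`n`.  Then `v_p(I^n M / I^(n+1) N) = v_p(M / I^(n+1) N)` for all sufficiently large `n`. -/
theorem v_number_at_prime_of_InM_eq_v_number_of_M
    {R M : Type*} [CommRing R] [IsNoetherianRing R]
    [AddCommGroup M] [Module R M] [Module.Finite R M]
    (𝒜 : ℤ → AddSubgroup R) (ℳ : ℤ → AddSubgroup M)
    [GradedRing 𝒜] [DirectSum.Decomposition ℳ]
    (hsmul : ∀ (i j : ℤ), ∀ r ∈ 𝒜 i, ∀ x ∈ ℳ j, r • x ∈ ℳ (i + j))
    (hA : ∀ i : ℤ, i < 0 → 𝒜 i = ⊥)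
    (I : Ideal R) (hI : Ideal.IsHomogeneous 𝒜 I)
    (N : Submodule R M) (hN : ∀ x ∈ N, ∀ i : ℤ, (DirectSum.decompose ℳ x i : M) ∈ N)
    (c : ℕ) (y : Fin c → R) (d : Fin c → ℤ) (hdmono : Monotone d)
    (hy : ∀ j, y j ∈ 𝒜 (d j))
    (J : Ideal R) (hJgen : J = Ideal.span (Set.range y)) (hJI : J ≤ I)
    (m0 : ℕ) (hred : J * I ^ m0 = I ^ (m0 + 1))
    (h0 : ∀ x : M, (∀ r ∈ I, r • x = 0) → x = 0)
    (hasseq : ∃ n₀ : ℕ, ∀ n ≥ n₀,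
      {q : Ideal R | q.IsPrime ∧ ∃ x ∈ (I ^ n • ⊤ : Submodule R M),
          ∀ r : R, r ∈ q ↔ r • x ∈ (I ^ (n + 1) • N : Submodule R M)}
        = {q : Ideal R | q.IsPrime ∧ ∃ x : M,
            ∀ r : R, r ∈ q ↔ r • x ∈ (I ^ (n + 1) • N : Submodule R M)})
    (p : Ideal R) (hp : p.IsPrime) (hIp : I ≤ p)
    (hass : ∃ n₀ : ℕ, ∀ n ≥ n₀, ∃ x : M,
      ∀ r : R, r ∈ p ↔ r • x ∈ (I ^ n • N : Submodule R M)) :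
    ∃ n₁ : ℕ, ∀ n ≥ n₁,
      sInf {u : ℤ | ∃ x ∈ ℳ u, x ∈ (I ^ n • ⊤ : Submodule R M) ∧
          ∀ r : R, r ∈ p ↔ r • x ∈ (I ^ (n + 1) • N : Submodule R M)}
        = sInf {u : ℤ | ∃ x ∈ ℳ u,
            ∀ r : R, r ∈ p ↔ r • x ∈ (I ^ (n + 1) • N : Submodule R M)} := by
  obtain ⟨n₀, hn₀⟩ := colon_key' I h0
  refine ⟨n₀, fun n hn => ?_⟩
  congr 1
  ext u
  simp only [Set.mem_setOf_eq]
  constructor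
  · rintro ⟨x, hxm, _, hcol⟩; exact ⟨x, hxm, hcol⟩
  · rintro ⟨x, hxm, hcol⟩
    refine ⟨x, hxm, ?_, hcol⟩
    refine hn₀ n hn x fun r hr => ?_
    exact Submodule.smul_mono le_rfl le_top ((hcol r).mp (hIp hr))
end
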